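/- arXiv:2605.00155 — 6 statements merged into one kernel-verified Lean document; each statement's English description precedes it below -/
import Mathlib

section
/- For any policy vector π in the probability simplex Δ_n, any reward vector r̂ ∈ ℝⁿ, and budget δ ≥ 0, the worst-case regret over ℓ₁-bounded reward perturbations satisfies max_{‖Δ‖₁ ≤ δ} max_{β ∈ Δ_n} ⟨β − π, r̂ + Δ⟩ = δ + max_{1 ≤ i ≤ n} (r̂ᵢ − δ πᵢ) − ⟨π, r̂⟩. -/
open scoped BigOperators

/-- Auxiliary: key perturbation bound. -/
lemma stmt0_key (n : ℕ) (π : Fin n → ℝ) (hπ0 : ∀ i, 0 ≤ π i)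
    (hπ1 : ∑ i, π i = 1) (Δ : Fin n → ℝ) (δ : ℝ)
    (hΔ : (∑ i, |Δ i|) ≤ δ) (k : Fin n) :
    Δ k - ∑ i, π i * Δ i ≤ δ * (1 - π k) := by
  have hπk1 : π k ≤ 1 := by
    rw [← hπ1]
    exact Finset.single_le_sum (fun i _ => hπ0 i) (Finset.mem_univ k)
  have h1 : Δ k - ∑ i, π i * Δ i = ∑ i, π i * (Δ k - Δ i) := by
    simp [mul_sub, Finset.sum_sub_distrib, ← Finset.sum_mul, hπ1]
  have h2 : ∑ i, π i * (Δ k - Δ i) = ∑ i ∈ Finset.univ.erase k, π i * (Δ k - Δ i) := by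
    rw [Finset.sum_erase]
    simp
  have h3 : ∀ i ∈ Finset.univ.erase k, π i * (Δ k - Δ i) ≤
      π i * |Δ k| + (1 - π k) * |Δ i| := by
    intro i hi
    have hik : i ≠ k := Finset.ne_of_mem_erase hi
    have hπik : π i ≤ 1 - π k := by
      have : π i + π k ≤ ∑ j, π j := by
        rw [← Finset.sum_pair hik]
        exact Finset.sum_le_sum_of_subset_of_nonneg (Finset.subset_univ _)
          (fun j _ _ => hπ0 j)
      rw [hπ1] at this; linarith
    have hb : π i * (Δ k - Δ i) ≤ π i * (|Δ k| + |Δ i|) := by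
      apply mul_le_mul_of_nonneg_left _ (hπ0 i)
      have := abs_le.mp (le_refl |Δ k - Δ i|)
      calc Δ k - Δ i ≤ |Δ k - Δ i| := le_abs_self _
        _ ≤ |Δ k| + |Δ i| := abs_sub _ _
    calc π i * (Δ k - Δ i) ≤ π i * (|Δ k| + |Δ i|) := hb
      _ = π i * |Δ k| + π i * |Δ i| := by ring
      _ ≤ π i * |Δ k| + (1 - π k) * |Δ i| := by
          have := mul_le_mul_of_nonneg_right hπik (abs_nonneg (Δ i))
          linarith
  have h4 : ∑ i ∈ Finset.univ.erase k, (π i * |Δ k| + (1 - π k) * |Δ i|)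
      = (1 - π k) * ∑ i, |Δ i| := by
    rw [Finset.sum_add_distrib, ← Finset.sum_mul, ← Finset.mul_sum,
      Finset.sum_erase_eq_sub (Finset.mem_univ k),
      Finset.sum_erase_eq_sub (Finset.mem_univ k), hπ1]
    ring
  calc Δ k - ∑ i, π i * Δ i
      = ∑ i ∈ Finset.univ.erase k, π i * (Δ k - Δ i) := by rw [h1, h2]
    _ ≤ ∑ i ∈ Finset.univ.erase k, (π i * |Δ k| + (1 - π k) * |Δ i|) :=
        Finset.sum_le_sum h3
    _ = (1 - π k) * ∑ i, |Δ i| := h4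
    _ ≤ (1 - π k) * δ := mul_le_mul_of_nonneg_left hΔ (by linarith)
    _ = δ * (1 - π k) := by ring

/-- inner adversary closed form for worst-case regret under an
ℓ₁-bounded reward perturbation. -/
theorem stmt0 (n : ℕ) [NeZero n] (π : Fin n → ℝ) (hπ : π ∈ stdSimplex ℝ (Fin n))
    (r : Fin n → ℝ) (δ : ℝ) (hδ : 0 ≤ δ) :
    IsGreatest
      {v : ℝ | ∃ Δ : Fin n → ℝ, (∑ i, |Δ i|) ≤ δ ∧
        ∃ β ∈ stdSimplex ℝ (Fin n), v = ∑ i, (β i - π i) * (r i + Δ i)}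
      (δ + (⨆ i, (r i - δ * π i)) - ∑ i, π i * r i) := by
  obtain ⟨hπ0, hπ1⟩ := hπ
  have hπ0' : ∀ i, 0 ≤ π i := hπ0
  have hbdd : BddAbove (Set.range fun i => r i - δ * π i) :=
    Set.Finite.bddAbove (Set.finite_range _)
  obtain ⟨j, hj⟩ := Finite.exists_max (fun i => r i - δ * π i)
  have hM : (⨆ i, (r i - δ * π i)) = r j - δ * π j :=
    le_antisymm (ciSup_le hj) (le_ciSup hbdd j)
  constructor
  · -- membership
    refine ⟨fun i => if i = j then δ else 0, ?_, fun i => if i = j then 1 else 0,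
      ⟨fun i => ?_, ?_⟩, ?_⟩
    · simp [apply_ite abs, abs_of_nonneg hδ, Finset.sum_ite_eq']
    · dsimp only; split <;> norm_num
    · simp [Finset.sum_ite_eq']
    · have hterm : ∀ i, ((if i = j then (1:ℝ) else 0) - π i) * (r i + if i = j then δ else 0)
          = (if i = j then (r i + δ - π i * δ) else 0) - π i * r i := by
        intro i
        by_cases h : i = j
        · simp [h]; ring
        · simp [h]
      rw [hM]
      calc δ + (r j - δ * π j) - ∑ i, π i * r i
          = (r j + δ - π j * δ) - ∑ i, π i * r i := by ring
        _ = ∑ i, ((if i = j then (r i + δ - π i * δ) else 0) - π i * r i) := by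
            rw [Finset.sum_sub_distrib, Finset.sum_ite_eq' Finset.univ j
              (fun i => r i + δ - π i * δ)]
            simp
        _ = ∑ i, ((if i = j then (1:ℝ) else 0) - π i) * (r i + if i = j then δ else 0) := by
            exact Finset.sum_congr rfl (fun i _ => (hterm i).symm)
  · -- upper bound
    rintro v ⟨Δ, hΔ, β, ⟨hβ0, hβ1⟩, rfl⟩
    have hβ0' : ∀ i, 0 ≤ β i := hβ0
    obtain ⟨k, hk⟩ := Finite.exists_max (fun i => r i + Δ i)
    have hsplit : ∑ i, (β i - π i) * (r i + Δ i)
        = (∑ i, β i * (r i + Δ i)) - (∑ i, π i * r i) - (∑ i, π i * Δ i) := by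
      rw [← Finset.sum_sub_distrib, ← Finset.sum_sub_distrib]
      exact Finset.sum_congr rfl (fun i _ => by ring)
    have h1 : ∑ i, β i * (r i + Δ i) ≤ r k + Δ k := by
      calc ∑ i, β i * (r i + Δ i) ≤ ∑ i, β i * (r k + Δ k) :=
            Finset.sum_le_sum (fun i _ =>
              mul_le_mul_of_nonneg_left (hk i) (hβ0' i))
        _ = r k + Δ k := by rw [← Finset.sum_mul, hβ1, one_mul]
    have h2 : Δ k - ∑ i, π i * Δ i ≤ δ * (1 - π k) :=
      stmt0_key n π hπ0' hπ1 Δ δ hΔ k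
    have h3 : r k - δ * π k ≤ ⨆ i, (r i - δ * π i) := le_ciSup hbdd k
    rw [hsplit]
    have : r k + Δ k - ∑ i, π i * Δ i ≤ δ + (r k - δ * π k) := by
      have := h2; nlinarith [h2]
    linarith
end

section
/- Suppose r̂₁ ≥ r̂₂ ≥ ⋯ ≥ r̂ₙ and δ > 0. Let t₀ be the unique real solution of ∑ᵢ (r̂ᵢ − t)₊ = δ, and let t* = inf{t ≥ t₀ : ∑_{i : r̂ᵢ > t} (r̂₁ − r̂ᵢ) ≤ δ}. Then the vector π* with πᵢ* = (r̂ᵢ − t*)₊/δ for i = 2,…,n and π₁* = 1 − (1/δ)∑_{i=2}^n (r̂ᵢ − t*)₊ lies in Δ_n and minimizes the worst-case regret max_{‖Δ‖₁ ≤ δ} max_{β ∈ Δ_n} ⟨β − π, r̂ + Δ⟩ over π ∈ Δ_n. -/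
open scoped BigOperators

/-- Worst-case regret of `π` over ℓ₁-bounded perturbations of the reward `r`
with budget `δ`. -/
noncomputable def wcRegret (n : ℕ) (δ : ℝ) (r π : Fin n → ℝ) : ℝ :=
  sSup {v : ℝ | ∃ Δ : Fin n → ℝ, (∑ i, |Δ i|) ≤ δ ∧
    ∃ β ∈ stdSimplex ℝ (Fin n), v = ∑ i, (β i - π i) * (r i + Δ i)}

open Finset

/-- The maximum of `r j - δ * π j`. -/
noncomputable def Mv (n : ℕ) [NeZero n] (δ : ℝ) (r π : Fin n → ℝ) : ℝ :=
  Finset.univ.sup' Finset.univ_nonempty fun j => r j - δ * π j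

lemma wc_ub (n : ℕ) [NeZero n] (δ : ℝ) (hδ : 0 < δ) (r π : Fin n → ℝ)
    (hπ : π ∈ stdSimplex ℝ (Fin n)) (v : ℝ)
    (hv : ∃ Δ : Fin n → ℝ, (∑ i, |Δ i|) ≤ δ ∧
      ∃ β ∈ stdSimplex ℝ (Fin n), v = ∑ i, (β i - π i) * (r i + Δ i)) :
    v ≤ δ + Mv n δ r π - ∑ i, π i * r i := by
  obtain ⟨Δ, hΔ, β, hβ, rfl⟩ := hv
  obtain ⟨hπ0, hπ1⟩ := hπ
  obtain ⟨hβ0, hβ1⟩ := hβ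
  have hπle1 : ∀ j, π j ≤ 1 := by
    intro j
    rw [← hπ1]
    exact Finset.single_le_sum (fun i _ => hπ0 i) (mem_univ j)
  have hpair : ∀ i j : Fin n, i ≠ j → π i ≤ 1 - π j := by
    intro i j hij
    have : π i + π j ≤ ∑ k, π k := by
      rw [← Finset.sum_pair hij]
      exact Finset.sum_le_sum_of_subset_of_nonneg (subset_univ _)
        (fun k _ _ => hπ0 k)
    rw [hπ1] at this; linarith
  have key : ∀ j : Fin n, r j + Δ j ≤ δ + Mv n δ r π + ∑ i, π i * Δ i := by
    intro j
    have h1 : r j - δ * π j ≤ Mv n δ r π :=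
      Finset.le_sup' (fun j => r j - δ * π j) (mem_univ j)
    have h2 : Δ j - ∑ i, π i * Δ i ≤ (1 - π j) * δ := by
      have e1 : ∑ i, ((if i = j then (1:ℝ) else 0) - π i) * Δ i
          = Δ j - ∑ i, π i * Δ i := by
        rw [show (∑ i, ((if i = j then (1:ℝ) else 0) - π i) * Δ i)
            = (∑ i, (if i = j then (1:ℝ) else 0) * Δ i) - ∑ i, π i * Δ i from by
          rw [← Finset.sum_sub_distrib]
          exact Finset.sum_congr rfl fun i _ => by ring]
        congr 1
        simp [ite_mul]
      rw [← e1]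
      calc ∑ i, ((if i = j then (1:ℝ) else 0) - π i) * Δ i
          ≤ ∑ i, (1 - π j) * |Δ i| := by
            apply Finset.sum_le_sum
            intro i _
            have hb : |(if i = j then (1:ℝ) else 0) - π i| ≤ 1 - π j := by
              by_cases h : i = j
              · subst h
                rw [if_pos rfl, abs_of_nonneg (by linarith [hπle1 i])]
              · rw [if_neg h, zero_sub, abs_neg, abs_of_nonneg (hπ0 i)]
                exact hpair i j h
            calc ((if i = j then (1:ℝ) else 0) - π i) * Δ i
                ≤ |((if i = j then (1:ℝ) else 0) - π i) * Δ i| := le_abs_self _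
              _ = |(if i = j then (1:ℝ) else 0) - π i| * |Δ i| := abs_mul _ _
              _ ≤ (1 - π j) * |Δ i| :=
                  mul_le_mul_of_nonneg_right hb (abs_nonneg _)
        _ = (1 - π j) * ∑ i, |Δ i| := by rw [Finset.mul_sum]
        _ ≤ (1 - π j) * δ := by
            apply mul_le_mul_of_nonneg_left hΔ
            linarith [hπle1 j]
    nlinarith [hπ0 j]
  have split : ∑ i, (β i - π i) * (r i + Δ i)
      = (∑ i, β i * (r i + Δ i)) - (∑ i, π i * r i) - (∑ i, π i * Δ i) := by
    rw [← Finset.sum_sub_distrib, ← Finset.sum_sub_distrib]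
    apply Finset.sum_congr rfl; intro i _; ring
  rw [split]
  have hβsum : ∑ i, β i * (r i + Δ i) ≤ δ + Mv n δ r π + ∑ i, π i * Δ i := by
    calc ∑ i, β i * (r i + Δ i)
        ≤ ∑ i, β i * (δ + Mv n δ r π + ∑ k, π k * Δ k) := by
          apply Finset.sum_le_sum
          intro i _
          exact mul_le_mul_of_nonneg_left (key i) (hβ0 i)
      _ = δ + Mv n δ r π + ∑ k, π k * Δ k := by
          rw [← Finset.sum_mul, hβ1, one_mul]
  linarith

lemma wc_mem (n : ℕ) [NeZero n] (δ : ℝ) (hδ : 0 < δ) (r π : Fin n → ℝ) :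
    ∃ Δ : Fin n → ℝ, (∑ i, |Δ i|) ≤ δ ∧
      ∃ β ∈ stdSimplex ℝ (Fin n),
        δ + Mv n δ r π - ∑ i, π i * r i = ∑ i, (β i - π i) * (r i + Δ i) := by
  obtain ⟨j₀, -, hj₀⟩ := Finset.exists_mem_eq_sup' (Finset.univ_nonempty (α := Fin n))
    (fun j => r j - δ * π j)
  refine ⟨fun i => if i = j₀ then δ else 0, ?_, fun i => if i = j₀ then 1 else 0, ⟨?_, ?_⟩, ?_⟩
  · rw [show (∑ i, |if i = j₀ then δ else (0:ℝ)|) = ∑ i, if i = j₀ then |δ| else 0 from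
      Finset.sum_congr rfl (fun i _ => by split <;> simp)]
    rw [Finset.sum_ite_eq' univ j₀ fun _ => |δ|]
    simp [abs_of_pos hδ]
  · intro i; dsimp; split <;> norm_num
  · rw [Finset.sum_ite_eq' univ j₀ fun _ => (1:ℝ)]; simp
  · have e1 : ∑ i, ((if i = j₀ then (1:ℝ) else 0) - π i) * (r i + if i = j₀ then δ else 0)
        = (∑ i, (if i = j₀ then (1:ℝ) else 0) * (r i + if i = j₀ then δ else 0))
          - (∑ i, π i * r i) - (∑ i, π i * if i = j₀ then δ else 0) := by
      rw [← Finset.sum_sub_distrib, ← Finset.sum_sub_distrib]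
      apply Finset.sum_congr rfl; intro i _; ring
    rw [e1]
    have e2 : ∑ i, (if i = j₀ then (1:ℝ) else 0) * (r i + if i = j₀ then δ else 0)
        = r j₀ + δ := by
      rw [show (∑ i, (if i = j₀ then (1:ℝ) else 0) * (r i + if i = j₀ then δ else 0))
          = ∑ i, (if i = j₀ then r j₀ + δ else 0) from
        Finset.sum_congr rfl (fun i _ => by by_cases h : i = j₀ <;> simp [h])]
      rw [Finset.sum_ite_eq' univ j₀ fun _ => r j₀ + δ]; simp
    have e3 : ∑ i, π i * (if i = j₀ then δ else 0) = π j₀ * δ := by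
      rw [show (∑ i, π i * (if i = j₀ then δ else 0))
          = ∑ i, (if i = j₀ then π j₀ * δ else 0) from
        Finset.sum_congr rfl (fun i _ => by by_cases h : i = j₀ <;> simp [h])]
      rw [Finset.sum_ite_eq' univ j₀ fun _ => π j₀ * δ]; simp
    have hj : Mv n δ r π = r j₀ - δ * π j₀ := hj₀
    rw [e2, e3, hj]
    ring

lemma wc_eq (n : ℕ) [NeZero n] (δ : ℝ) (hδ : 0 < δ) (r π : Fin n → ℝ)
    (hπ : π ∈ stdSimplex ℝ (Fin n)) :
    wcRegret n δ r π = δ + Mv n δ r π - ∑ i, π i * r i := by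
  have hub : ∀ v ∈ {v : ℝ | ∃ Δ : Fin n → ℝ, (∑ i, |Δ i|) ≤ δ ∧
      ∃ β ∈ stdSimplex ℝ (Fin n), v = ∑ i, (β i - π i) * (r i + Δ i)},
      v ≤ δ + Mv n δ r π - ∑ i, π i * r i := fun v hv => wc_ub n δ hδ r π hπ v hv
  have hmem := wc_mem n δ hδ r π
  apply le_antisymm
  · exact csSup_le ⟨_, hmem⟩ hub
  · exact le_csSup ⟨_, hub⟩ hmem

/-- the water-filling policy with leftover mass on the top response
lies in the simplex and minimizes the worst-case regret. -/
theorem stmt2 (n : ℕ) [NeZero n] (r : Fin n → ℝ) (hr : Antitone r)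
    (δ : ℝ) (hδ : 0 < δ)
    (t₀ : ℝ) (ht₀ : ∑ i, max (r i - t₀) 0 = δ)
    (tstar : ℝ)
    (htstar : tstar = sInf {t : ℝ | t₀ ≤ t ∧
      (∑ i ∈ Finset.univ.filter (fun i => t < r i), (r 0 - r i)) ≤ δ})
    (πstar : Fin n → ℝ)
    (hπstar : πstar = fun i =>
      if i = 0 then 1 - (∑ j ∈ Finset.univ.erase 0, max (r j - tstar) 0) / δ
      else max (r i - tstar) 0 / δ) :
    πstar ∈ stdSimplex ℝ (Fin n) ∧
    ∀ π ∈ stdSimplex ℝ (Fin n), wcRegret n δ r πstar ≤ wcRegret n δ r π := by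
  have hr0 : ∀ i, r i ≤ r 0 := fun i => hr (Fin.zero_le i)
  set Tset : Set ℝ := {t : ℝ | t₀ ≤ t ∧
      (∑ i ∈ Finset.univ.filter (fun i => t < r i), (r 0 - r i)) ≤ δ} with hTset
  have hTne : Tset.Nonempty := by
    refine ⟨max t₀ (r 0), le_max_left _ _, ?_⟩
    have he : Finset.univ.filter (fun i => max t₀ (r 0) < r i) = ∅ := by
      rw [Finset.filter_eq_empty_iff]
      intro i _
      push_neg
      exact le_trans (hr0 i) (le_max_right _ _)
    rw [he, Finset.sum_empty]
    exact hδ.le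
  have hTbdd : BddBelow Tset := ⟨t₀, fun t ht => ht.1⟩
  have ht0star : t₀ ≤ tstar := by
    rw [htstar]; exact le_csInf hTne (fun t ht => ht.1)
  have hSstar : ∑ i, max (r i - tstar) 0 ≤ δ := by
    rw [← ht₀]
    exact Finset.sum_le_sum fun i _ => max_le_max (by linarith) le_rfl
  have hQ : max (r 0 - tstar) 0 + ∑ j ∈ Finset.univ.erase 0, max (r j - tstar) 0
      = ∑ i, max (r i - tstar) 0 :=
    Finset.add_sum_erase (Finset.univ : Finset (Fin n))
      (fun i => max (r i - tstar) 0) (Finset.mem_univ 0)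
  have hQnn : 0 ≤ ∑ j ∈ Finset.univ.erase 0, max (r j - tstar) 0 :=
    Finset.sum_nonneg fun j _ => le_max_right _ _
  have hQδ : ∑ j ∈ Finset.univ.erase 0, max (r j - tstar) 0 ≤ δ := by
    have := le_max_right (r 0 - tstar) 0
    linarith [hSstar]
  have hps0 : πstar 0 = 1 - (∑ j ∈ Finset.univ.erase 0, max (r j - tstar) 0)/δ := by
    rw [hπstar]; simp
  have hpsj : ∀ j : Fin n, j ≠ 0 → πstar j = max (r j - tstar) 0 / δ := by
    intro j hj; rw [hπstar]; simp [hj]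
  -- πstar lies in the simplex
  have hmem : πstar ∈ stdSimplex ℝ (Fin n) := by
    constructor
    · intro i
      by_cases h : i = 0
      · subst h
        rw [hps0]
        have : (∑ j ∈ Finset.univ.erase 0, max (r j - tstar) 0)/δ ≤ 1 :=
          (div_le_one hδ).2 hQδ
        linarith
      · rw [hpsj i h]
        positivity
    · rw [← Finset.add_sum_erase _ πstar (Finset.mem_univ 0), hps0]
      rw [Finset.sum_congr rfl (fun j hj => hpsj j (Finset.ne_of_mem_erase hj))]
      rw [← Finset.sum_div]
      ring
  -- tstar itself satisfies the defining constraint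
  have hDstar : (∑ i ∈ Finset.univ.filter (fun i => tstar < r i), (r 0 - r i)) ≤ δ := by
    by_cases hB : (Finset.univ.filter (fun i => tstar < r i)) = ∅
    · rw [hB, Finset.sum_empty]; exact hδ.le
    · have hBne : (Finset.univ.filter (fun i => tstar < r i)).Nonempty :=
        Finset.nonempty_iff_ne_empty.2 hB
      set m := (Finset.univ.filter (fun i => tstar < r i)).inf' hBne r with hm
      have htm : tstar < m := by
        rw [hm, Finset.lt_inf'_iff]
        intro i hi
        exact (Finset.mem_filter.1 hi).2
      obtain ⟨t, htT, htlt⟩ : ∃ t ∈ Tset, t < m := by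
        have : sInf Tset < m := by rw [← htstar]; exact htm
        exact exists_lt_of_csInf_lt hTne this
      have htt : tstar ≤ t := by rw [htstar]; exact csInf_le hTbdd htT
      have hfe : Finset.univ.filter (fun i => t < r i)
          = Finset.univ.filter (fun i => tstar < r i) := by
        apply Finset.filter_congr
        intro i _
        constructor
        · intro h; simpa using lt_of_le_of_lt htt (by simpa using h)
        · intro h
          have : m ≤ r i := Finset.inf'_le r
            (Finset.mem_filter.2 ⟨Finset.mem_univ i, by simpa using h⟩)
          simpa using lt_of_lt_of_le htlt this
      rw [← hfe]
      exact htT.2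
  -- D3a : Mv of πstar is at most tstar
  have hD3a : Mv n δ r πstar ≤ tstar := by
    apply Finset.sup'_le
    intro j _
    by_cases h : j = 0
    · subst h
      rw [hps0]
      have he : δ * (1 - (∑ j ∈ Finset.univ.erase 0, max (r j - tstar) 0)/δ)
          = δ - ∑ j ∈ Finset.univ.erase 0, max (r j - tstar) 0 := by
        field_simp
      rw [he]
      have := le_max_left (r 0 - tstar) 0
      linarith
    · rw [hpsj j h, mul_div_cancel₀ _ (ne_of_gt hδ)]
      rcases max_cases (r j - tstar) 0 with ⟨h1, h2⟩ | ⟨h1, h2⟩ <;> rw [h1] <;> linarith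
  -- D3b : the value of πstar
  have hD3b : ∑ i, πstar i * r i
      = r 0 - (∑ i, (r 0 - r i) * max (r i - tstar) 0) / δ := by
    rw [← Finset.add_sum_erase (Finset.univ : Finset (Fin n))
        (fun i => πstar i * r i) (Finset.mem_univ 0)]
    rw [← Finset.add_sum_erase (Finset.univ : Finset (Fin n))
        (fun i => (r 0 - r i) * max (r i - tstar) 0) (Finset.mem_univ 0)]
    have hsc : ∑ j ∈ Finset.univ.erase 0, πstar j * r j
        = ∑ j ∈ Finset.univ.erase 0, (max (r j - tstar) 0 / δ) * r j :=
      Finset.sum_congr rfl fun j hj => by rw [hpsj j (Finset.ne_of_mem_erase hj)]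
    rw [hsc, hps0]
    have rel : ∑ j ∈ Finset.univ.erase 0, (max (r j - tstar) 0 / δ) * r j
        = ((∑ j ∈ Finset.univ.erase 0, max (r j - tstar) 0) * r 0
          - ∑ j ∈ Finset.univ.erase 0, (r 0 - r j) * max (r j - tstar) 0)/δ := by
      rw [Finset.sum_mul, ← Finset.sum_sub_distrib, Finset.sum_div]
      exact Finset.sum_congr rfl fun j _ => by ring
    rw [rel]
    field_simp
    ring
  -- D4 : monotonicity of the certificate function
  have hD4 : ∀ M : ℝ, t₀ ≤ M →
      tstar + (∑ i, (r 0 - r i) * max (r i - tstar) 0)/δ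
        ≤ M + (∑ i, (r 0 - r i) * max (r i - M) 0)/δ := by
    intro M hM
    rcases le_or_gt tstar M with hc | hc
    · have termwise : ∀ i : Fin n,
          (r 0 - r i) * max (r i - tstar) 0
            - (M - tstar) * (if tstar < r i then (r 0 - r i) else 0)
          ≤ (r 0 - r i) * max (r i - M) 0 := by
        intro i
        have hcnn : (0:ℝ) ≤ r 0 - r i := by linarith [hr0 i]
        by_cases h : tstar < r i
        · rw [if_pos h, max_eq_left (by linarith : (0:ℝ) ≤ r i - tstar)]
          have h5 : r i - M ≤ max (r i - M) 0 := le_max_left _ _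
          nlinarith
        · rw [if_neg h]
          push_neg at h
          rw [max_eq_right (by linarith : r i - tstar ≤ 0)]
          have : 0 ≤ (r 0 - r i) * max (r i - M) 0 :=
            mul_nonneg hcnn (le_max_right _ _)
          linarith
      have hsum := Finset.sum_le_sum (fun i (_ : i ∈ Finset.univ) => termwise i)
      rw [Finset.sum_sub_distrib, ← Finset.mul_sum, ← Finset.sum_filter] at hsum
      have hAB : (∑ i, (r 0 - r i) * max (r i - tstar) 0)
          - (∑ i, (r 0 - r i) * max (r i - M) 0) ≤ (M - tstar) * δ := by
        have h6 : (M - tstar) * (∑ i ∈ Finset.univ.filter (fun i => tstar < r i), (r 0 - r i))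
            ≤ (M - tstar) * δ := mul_le_mul_of_nonneg_left hDstar (by linarith)
        linarith
      have hdiv : ((∑ i, (r 0 - r i) * max (r i - tstar) 0)
          - (∑ i, (r 0 - r i) * max (r i - M) 0))/δ ≤ M - tstar := by
        rw [div_le_iff₀ hδ]
        linarith
      rw [sub_div] at hdiv
      linarith
    · set s₀ : ℝ := max M (Finset.univ.sup' Finset.univ_nonempty
        (fun i => if r i < tstar then r i else M)) with hs₀
      have hs₀M : M ≤ s₀ := le_max_left _ _
      have hs₀lt : s₀ < tstar := by
        rw [hs₀]
        apply max_lt hc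
        rw [Finset.sup'_lt_iff]
        intro i _
        split
        · assumption
        · exact hc
      have hsiff : ∀ i, s₀ < r i ↔ tstar ≤ r i := by
        intro i
        constructor
        · intro h
          by_contra hcon
          push_neg at hcon
          have h7 : r i ≤ s₀ := by
            have h8 : (if r i < tstar then r i else M)
                ≤ Finset.univ.sup' Finset.univ_nonempty
                  (fun i => if r i < tstar then r i else M) :=
              Finset.le_sup' (fun i => if r i < tstar then r i else M) (Finset.mem_univ i)
            rw [if_pos hcon] at h8
            exact h8.trans (le_max_right _ _)
          linarith
        · intro h; linarith
      have hs₀T : s₀ ∉ Tset := by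
        intro hmem'
        have : sInf Tset ≤ s₀ := csInf_le hTbdd hmem'
        rw [← htstar] at this
        linarith
      have hD : δ < ∑ i ∈ Finset.univ.filter (fun i => s₀ < r i), (r 0 - r i) := by
        by_contra hcon
        push_neg at hcon
        exact hs₀T ⟨le_trans hM hs₀M, hcon⟩
      have termwise : ∀ i : Fin n,
          (r 0 - r i) * max (r i - tstar) 0
            + (tstar - M) * (if s₀ < r i then (r 0 - r i) else 0)
          ≤ (r 0 - r i) * max (r i - M) 0 := by
        intro i
        have hcnn : (0:ℝ) ≤ r 0 - r i := by linarith [hr0 i]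
        by_cases h : s₀ < r i
        · rw [if_pos h]
          have hti : tstar ≤ r i := (hsiff i).1 h
          rw [max_eq_left (by linarith : (0:ℝ) ≤ r i - tstar),
            max_eq_left (by linarith : (0:ℝ) ≤ r i - M)]
          have : (r 0 - r i) * (r i - tstar) + (tstar - M) * (r 0 - r i)
              = (r 0 - r i) * (r i - M) := by ring
          linarith
        · rw [if_neg h]
          push_neg at h
          rw [max_eq_right (by linarith : r i - tstar ≤ 0)]
          have : 0 ≤ (r 0 - r i) * max (r i - M) 0 :=
            mul_nonneg hcnn (le_max_right _ _)
          linarith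
      have hsum := Finset.sum_le_sum (fun i (_ : i ∈ Finset.univ) => termwise i)
      rw [Finset.sum_add_distrib, ← Finset.mul_sum, ← Finset.sum_filter] at hsum
      have hAB : (∑ i, (r 0 - r i) * max (r i - tstar) 0) + (tstar - M) * δ
          ≤ ∑ i, (r 0 - r i) * max (r i - M) 0 := by
        have h6 : (tstar - M) * δ
            ≤ (tstar - M) * (∑ i ∈ Finset.univ.filter (fun i => s₀ < r i), (r 0 - r i)) :=
          mul_le_mul_of_nonneg_left hD.le (by linarith)
        linarith
      have h9 : (∑ i, (r 0 - r i) * max (r i - tstar) 0)/δ + (tstar - M)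
          ≤ (∑ i, (r 0 - r i) * max (r i - M) 0)/δ := by
        have h10 : ((∑ i, (r 0 - r i) * max (r i - tstar) 0) + (tstar - M) * δ)/δ
            = (∑ i, (r 0 - r i) * max (r i - tstar) 0)/δ + (tstar - M) := by
          field_simp
        rw [← h10]
        gcongr
      linarith
  refine ⟨hmem, ?_⟩
  intro π hπ
  -- D1 : t₀ ≤ Mv π
  have hD1 : t₀ ≤ Mv n δ r π := by
    have hq : ∀ i, max (r i - Mv n δ r π) 0 ≤ δ * π i := by
      intro i
      apply max_le
      · have h1 : r i - δ * π i ≤ Mv n δ r π :=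
          Finset.le_sup' (fun j => r j - δ * π j) (Finset.mem_univ i)
        linarith
      · exact mul_nonneg hδ.le (hπ.1 i)
    have hSM : ∑ i, max (r i - Mv n δ r π) 0 ≤ δ := by
      calc ∑ i, max (r i - Mv n δ r π) 0 ≤ ∑ i, δ * π i :=
            Finset.sum_le_sum fun i _ => hq i
        _ = δ := by rw [← Finset.mul_sum, hπ.2, mul_one]
    by_contra hM
    push_neg at hM
    obtain ⟨istar, histar⟩ : ∃ i, 0 < max (r i - t₀) 0 := by
      by_contra h
      push_neg at h
      have : ∑ i, max (r i - t₀) 0 ≤ 0 := Finset.sum_nonpos fun i _ => h i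
      rw [ht₀] at this; linarith
    have hri : t₀ < r istar := by
      rcases max_cases (r istar - t₀) 0 with ⟨h1, h2⟩ | ⟨h1, h2⟩ <;>
        rw [h1] at histar <;> linarith
    have : ∑ i, max (r i - t₀) 0 < ∑ i, max (r i - Mv n δ r π) 0 := by
      apply Finset.sum_lt_sum
      · intro i _; exact max_le_max (by linarith) le_rfl
      · refine ⟨istar, Finset.mem_univ _, ?_⟩
        rw [max_eq_left (by linarith : (0:ℝ) ≤ r istar - t₀),
          max_eq_left (by linarith : (0:ℝ) ≤ r istar - Mv n δ r π)]
        linarith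
    rw [ht₀] at this
    linarith
  -- D2 : value bound for π
  have hD2 : ∑ i, π i * r i
      ≤ r 0 - (∑ i, (r 0 - r i) * max (r i - Mv n δ r π) 0) / δ := by
    have hq : ∀ i, max (r i - Mv n δ r π) 0 / δ ≤ π i := by
      intro i
      rw [div_le_iff₀ hδ]
      apply max_le
      · have h1 : r i - δ * π i ≤ Mv n δ r π :=
          Finset.le_sup' (fun j => r j - δ * π j) (Finset.mem_univ i)
        linarith
      · exact mul_nonneg (hπ.1 i) hδ.le
    calc ∑ i, π i * r i
        ≤ ∑ i, (π i * r 0 - (r 0 - r i) * (max (r i - Mv n δ r π) 0 / δ)) := by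
          apply Finset.sum_le_sum
          intro i _
          have h3 : (r 0 - r i) * (max (r i - Mv n δ r π) 0 / δ)
              ≤ (r 0 - r i) * π i :=
            mul_le_mul_of_nonneg_left (hq i) (by linarith [hr0 i])
          have h4 : (r 0 - r i) * π i = π i * r 0 - π i * r i := by ring
          linarith
      _ = r 0 - (∑ i, (r 0 - r i) * max (r i - Mv n δ r π) 0) / δ := by
          rw [Finset.sum_sub_distrib, ← Finset.sum_mul, hπ.2, one_mul, Finset.sum_div]
          congr 1
          exact Finset.sum_congr rfl fun i _ => by ring
  rw [wc_eq n δ hδ r πstar hmem, wc_eq n δ hδ r π hπ]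
  have h4 := hD4 (Mv n δ r π) hD1
  rw [hD3b]
  linarith [hD3a, h4, hD2]
end

section
/- Let Y₁,…,Y_K be i.i.d. samples from a distribution q. Let u, h be measurable functions with 0 ≤ u(y) ≤ U and |h(y)| ≤ H almost surely, and set ν = E_q[u(Y)] > 0 and μ = E_q[u(Y)h(Y)]/ν. Define the self-normalized estimator μ̂_K = (∑ₖ u(Yₖ)h(Yₖ))/(∑ₖ u(Yₖ)). Then for every η ∈ (0,1), if K ≥ (2U²/ν²) log(4/η), with probability at least 1 − η one has |μ̂_K − μ| ≤ (4UH/ν)√(log(4/η)/(2K)). -/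
open scoped BigOperators
open MeasureTheory
open Real
open ProbabilityTheory (mgf mgf_nonneg iIndepFun measure_ge_le_exp_mul_mgf)

lemma key_ineq {p : ℝ} (hp0 : 0 ≤ p) (hp1 : p ≤ 1) (u : ℝ) :
    1 - p + p * Real.exp u ≤ Real.exp (p * u + u ^ 2 / 8) := by
  have hφpos : ∀ x : ℝ, 0 < 1 - p + p * Real.exp x := by
    intro x
    rcases eq_or_lt_of_le hp0 with h | h
    · simp [← h]
    · have := Real.exp_pos x
      nlinarith
  set φ : ℝ → ℝ := fun x => 1 - p + p * Real.exp x with hφ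
  set F : ℝ → ℝ := fun x => p * x + x ^ 2 / 8 - Real.log (φ x) with hF
  set F' : ℝ → ℝ := fun x => p + x / 4 - p * Real.exp x / φ x with hF'
  have hφd : ∀ x, HasDerivAt φ (p * Real.exp x) x := fun x =>
    ((Real.hasDerivAt_exp x).const_mul p).const_add (1 - p)
  have hFd : ∀ x, HasDerivAt F (F' x) x := by
    intro x
    have h1 : HasDerivAt (fun y : ℝ => p * y + y ^ 2 / 8) (p * 1 + (2:ℕ) * x ^ (2-1) / 8) x :=
      ((hasDerivAt_id x).const_mul p).add ((hasDerivAt_pow 2 x).div_const 8)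
    have h2 : HasDerivAt (fun y => Real.log (φ y)) (p * Real.exp x / φ x) x :=
      (hφd x).log (hφpos x).ne'
    have := h1.sub h2
    refine this.congr_deriv ?_
    simp [hF']; ring
  have hF'd : ∀ x, HasDerivAt F' (1 / 4 - p * (1 - p) * Real.exp x / (φ x) ^ 2) x := by
    intro x
    have h1 : HasDerivAt (fun y : ℝ => p + y / 4) (1 / 4) x :=
      ((hasDerivAt_id x).div_const 4).const_add p
    have h2 : HasDerivAt (fun y => p * Real.exp y / φ y)
        ((p * Real.exp x * φ x - p * Real.exp x * (p * Real.exp x)) / (φ x) ^ 2) x :=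
      ((Real.hasDerivAt_exp x).const_mul p).div (hφd x) (hφpos x).ne'
    have := h1.sub h2
    refine this.congr_deriv ?_
    have hne : (φ x) ^ 2 ≠ 0 := pow_ne_zero 2 (hφpos x).ne'
    field_simp
    ring
  have hF''nonneg : ∀ x : ℝ, 0 ≤ 1 / 4 - p * (1 - p) * Real.exp x / (φ x) ^ 2 := by
    intro x
    have h2 : p * (1 - p) * Real.exp x / (φ x) ^ 2 ≤ 1 / 4 := by
      rw [div_le_iff₀ (pow_pos (hφpos x) 2)]
      have := Real.exp_pos x
      nlinarith [sq_nonneg ((1 - p) - p * Real.exp x)]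
    linarith
  have hF'mono : Monotone F' :=
    monotone_of_deriv_nonneg (fun x => (hF'd x).differentiableAt)
      (fun x => by rw [(hF'd x).deriv]; exact hF''nonneg x)
  have hF'0 : F' 0 = 0 := by simp [hF', hφ]
  have hF0 : F 0 = 0 := by simp [hF, hφ]
  have hFdiff : Differentiable ℝ F := fun x => (hFd x).differentiableAt
  have key : 0 ≤ F u := by
    rcases le_total 0 u with hu | hu
    · have : MonotoneOn F (Set.Ici 0) := by
        apply monotoneOn_of_deriv_nonneg (convex_Ici 0) hFdiff.continuous.continuousOn
          hFdiff.differentiableOn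
        intro x hx
        rw [(hFd x).deriv]
        rw [← hF'0]
        exact hF'mono (le_of_lt (by simpa using hx))
      have := this (Set.self_mem_Ici) (by exact hu) hu
      rwa [hF0] at this
    · have : AntitoneOn F (Set.Iic 0) := by
        apply antitoneOn_of_deriv_nonpos (convex_Iic 0) hFdiff.continuous.continuousOn
          hFdiff.differentiableOn
        intro x hx
        rw [(hFd x).deriv]
        rw [← hF'0]
        exact hF'mono (le_of_lt (by simpa using hx))
      have := this (by exact hu) Set.self_mem_Iic hu
      rwa [hF0] at this
  have hlog : Real.log (φ u) ≤ p * u + u ^ 2 / 8 := by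
    simp only [hF] at key; linarith
  calc φ u = Real.exp (Real.log (φ u)) := (Real.exp_log (hφpos u)).symm
    _ ≤ Real.exp (p * u + u ^ 2 / 8) := Real.exp_le_exp.2 hlog

lemma hoeffding_mgf {Ω : Type*} [MeasurableSpace Ω] (μ : Measure Ω) [IsProbabilityMeasure μ]
    {X : Ω → ℝ} (hX : Measurable X) {a b : ℝ}
    (hab : ∀ᵐ ω ∂μ, X ω ∈ Set.Icc a b) (hmean : ∫ ω, X ω ∂μ = 0) (t : ℝ) :
    mgf X μ t ≤ Real.exp (t ^ 2 * (b - a) ^ 2 / 8) := by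
  have hXint : Integrable X μ := by
    refine (integrable_const (max |a| |b|)).mono' hX.aestronglyMeasurable ?_
    filter_upwards [hab] with ω hω
    rw [Real.norm_eq_abs]
    refine abs_le.2 ⟨?_, le_trans hω.2 ((le_abs_self b).trans (le_max_right _ _))⟩
    have h1 : -(max |a| |b|) ≤ a := by
      have := neg_abs_le a
      have := le_max_left |a| |b|
      linarith
    linarith [hω.1]
  have ha0 : a ≤ 0 := by
    rw [← hmean]
    have : ∫ _ω, a ∂μ ≤ ∫ ω, X ω ∂μ :=
      integral_mono_ae (integrable_const a) hXint (by filter_upwards [hab] with ω hω using hω.1)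
    simpa using this
  have hb0 : 0 ≤ b := by
    rw [← hmean]
    have : ∫ ω, X ω ∂μ ≤ ∫ _ω, b ∂μ :=
      integral_mono_ae hXint (integrable_const b) (by filter_upwards [hab] with ω hω using hω.2)
    simpa using this
  rcases eq_or_lt_of_le (le_trans ha0 hb0) with hab0 | haltb
  · -- a = 0 = b, X = 0 a.e.
    have ha : a = 0 := le_antisymm ha0 (by rw [hab0]; exact hb0)
    have hb : b = 0 := by rw [← hab0]; exact ha
    have : mgf X μ t = 1 := by
      rw [mgf]
      have : (fun ω => Real.exp (t * X ω)) =ᵐ[μ] fun _ => 1 := by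
        filter_upwards [hab] with ω hω
        have : X ω = 0 := le_antisymm (hb ▸ hω.2) (ha ▸ hω.1)
        simp [this]
      rw [integral_congr_ae this]; simp
    rw [this]
    exact Real.one_le_exp (by positivity)
  -- main case a < b
  set p : ℝ := -a / (b - a) with hp
  have hba : 0 < b - a := sub_pos.2 haltb
  have hp0 : 0 ≤ p := div_nonneg (neg_nonneg.2 ha0) hba.le
  have hp1 : p ≤ 1 := by rw [div_le_one hba]; linarith
  set A : ℝ := (b * Real.exp (t * a) - a * Real.exp (t * b)) / (b - a) with hA
  set B : ℝ := (Real.exp (t * b) - Real.exp (t * a)) / (b - a) with hB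
  have hpt : ∀ᵐ ω ∂μ, Real.exp (t * X ω) ≤ A + B * X ω := by
    filter_upwards [hab] with ω hω
    have w1 : (0:ℝ) ≤ (b - X ω) / (b - a) := div_nonneg (by linarith [hω.2]) hba.le
    have w2 : (0:ℝ) ≤ (X ω - a) / (b - a) := div_nonneg (by linarith [hω.1]) hba.le
    have wsum : (b - X ω) / (b - a) + (X ω - a) / (b - a) = 1 := by field_simp; ring
    have hconv := convexOn_exp.2 (Set.mem_univ (t * a)) (Set.mem_univ (t * b)) w1 w2 wsum
    have harg : ((b - X ω) / (b - a)) • (t * a) + ((X ω - a) / (b - a)) • (t * b) = t * X ω := by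
      simp only [smul_eq_mul]; field_simp; ring
    rw [harg] at hconv
    refine le_trans hconv (le_of_eq ?_)
    simp only [smul_eq_mul, hA, hB]
    field_simp
    ring
  have hexpint : Integrable (fun ω => Real.exp (t * X ω)) μ := by
    refine (integrable_const (max (Real.exp (t * a)) (Real.exp (t * b)))).mono'
      ((hX.const_mul t).exp).aestronglyMeasurable ?_
    filter_upwards [hab] with ω hω
    rw [Real.norm_eq_abs, abs_of_pos (Real.exp_pos _)]
    rcases le_total 0 t with ht | ht
    · exact le_max_of_le_right (Real.exp_le_exp.2 (mul_le_mul_of_nonneg_left hω.2 ht))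
    · exact le_max_of_le_left (Real.exp_le_exp.2 (mul_le_mul_of_nonpos_left hω.1 ht))
  have hlin_int : Integrable (fun ω => A + B * X ω) μ :=
    (integrable_const A).add (hXint.const_mul B)
  have step1 : mgf X μ t ≤ A := by
    have := integral_mono_ae hexpint hlin_int hpt
    rw [integral_add (integrable_const A) (hXint.const_mul B), integral_const,
      integral_const_mul, hmean] at this
    simpa [mgf] using this
  have step2 : A = Real.exp (t * a) * (1 - p + p * Real.exp (t * (b - a))) := by
    rw [hA, hp]
    rw [show t * b = t * a + t * (b - a) by ring, Real.exp_add]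
    field_simp
    ring
  have step3 : A ≤ Real.exp (t ^ 2 * (b - a) ^ 2 / 8) := by
    rw [step2]
    have := key_ineq hp0 hp1 (t * (b - a))
    calc Real.exp (t * a) * (1 - p + p * Real.exp (t * (b - a)))
        ≤ Real.exp (t * a) * Real.exp (p * (t * (b - a)) + (t * (b - a)) ^ 2 / 8) := by
          exact mul_le_mul_of_nonneg_left this (Real.exp_pos _).le
      _ = Real.exp (t * a + (p * (t * (b - a)) + (t * (b - a)) ^ 2 / 8)) :=
          (Real.exp_add _ _).symm
      _ = Real.exp (t ^ 2 * (b - a) ^ 2 / 8) := by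
          congr 1
          rw [hp]
          field_simp
          ring
  exact le_trans step1 step3

lemma chernoff_sum {Ω : Type*} [MeasurableSpace Ω] (P : Measure Ω) [IsProbabilityMeasure P]
    {K : ℕ} {X : Fin K → Ω → ℝ} (hmeas : ∀ k, Measurable (X k))
    (hindep : iIndepFun X P) {a b : ℝ}
    (hab : ∀ k, ∀ᵐ ω ∂P, X k ω ∈ Set.Icc a b) (hmean : ∀ k, ∫ ω, X k ω ∂P = 0)
    (c : ℝ) {t : ℝ} (ht : 0 ≤ t) :
    P {ω | c ≤ ∑ k, X k ω} ≤
      ENNReal.ofReal (Real.exp (-t * c + K * (t ^ 2 * (b - a) ^ 2 / 8))) := by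
  have hexpint : ∀ k : Fin K, Integrable (fun ω => Real.exp (t * X k ω)) P := by
    intro k
    refine (integrable_const (max (Real.exp (t * a)) (Real.exp (t * b)))).mono'
      (((hmeas k).const_mul t).exp).aestronglyMeasurable ?_
    filter_upwards [hab k] with ω hω
    rw [Real.norm_eq_abs, abs_of_pos (Real.exp_pos _)]
    rcases le_total 0 t with ht' | ht'
    · exact le_max_of_le_right (Real.exp_le_exp.2 (mul_le_mul_of_nonneg_left hω.2 ht'))
    · exact le_max_of_le_left (Real.exp_le_exp.2 (mul_le_mul_of_nonpos_left hω.1 ht'))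
  have hsumint : Integrable (fun ω => Real.exp (t * (∑ k, X k) ω)) P :=
    hindep.integrable_exp_mul_sum hmeas (fun k _ => hexpint k)
  have hcher := measure_ge_le_exp_mul_mgf (X := ∑ k, X k) (μ := P) c ht hsumint
  have hmgf : mgf (∑ k, X k) P t ≤ Real.exp (K * (t ^ 2 * (b - a) ^ 2 / 8)) := by
    rw [hindep.mgf_sum hmeas]
    calc ∏ k : Fin K, mgf (X k) P t
        ≤ ∏ _k : Fin K, Real.exp (t ^ 2 * (b - a) ^ 2 / 8) :=
          Finset.prod_le_prod (fun k _ => mgf_nonneg)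
            (fun k _ => hoeffding_mgf P (hmeas k) (hab k) (hmean k) t)
      _ = Real.exp (t ^ 2 * (b - a) ^ 2 / 8) ^ K := by
          rw [Finset.prod_const, Finset.card_univ, Fintype.card_fin]
      _ = Real.exp (K * (t ^ 2 * (b - a) ^ 2 / 8)) := by
          rw [← Real.exp_nat_mul]
  have hset : {ω | c ≤ ∑ k, X k ω} = {ω | c ≤ (∑ k, X k) ω} := by
    ext ω; simp [Finset.sum_apply]
  have hreal : (P {ω | c ≤ ∑ k, X k ω}).toReal ≤
      Real.exp (-t * c + K * (t ^ 2 * (b - a) ^ 2 / 8)) := by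
    rw [hset]
    calc (P {ω | c ≤ (∑ k, X k) ω}).toReal
        ≤ Real.exp (-t * c) * mgf (∑ k, X k) P t := hcher
      _ ≤ Real.exp (-t * c) * Real.exp (K * (t ^ 2 * (b - a) ^ 2 / 8)) :=
          mul_le_mul_of_nonneg_left hmgf (Real.exp_pos _).le
      _ = Real.exp (-t * c + K * (t ^ 2 * (b - a) ^ 2 / 8)) := (Real.exp_add _ _).symm
  calc P {ω | c ≤ ∑ k, X k ω}
      = ENNReal.ofReal (P {ω | c ≤ ∑ k, X k ω}).toReal :=
        (ENNReal.ofReal_toReal (measure_ne_top _ _)).symm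
    _ ≤ ENNReal.ofReal (Real.exp (-t * c + K * (t ^ 2 * (b - a) ^ 2 / 8))) :=
        ENNReal.ofReal_le_ofReal hreal

set_option maxHeartbeats 1000000

/-- finite-sample error bound for self-normalized importance
sampling. -/
theorem stmt8 {Ω α : Type*} [MeasurableSpace Ω] [MeasurableSpace α]
    (ℙ : Measure Ω) [IsProbabilityMeasure ℙ]
    (q : Measure α) [IsProbabilityMeasure q]
    (K : ℕ) (hK : 0 < K) (Y : Fin K → Ω → α)
    (hmeas : ∀ k, Measurable (Y k))
    (hlaw : ∀ k, Measure.map (Y k) ℙ = q)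
    (hindep : ProbabilityTheory.iIndepFun Y ℙ)
    (u h : α → ℝ) (hu : Measurable u) (hh : Measurable h)
    (U H : ℝ)
    (huU : ∀ᵐ y ∂q, 0 ≤ u y ∧ u y ≤ U)
    (hhH : ∀ᵐ y ∂q, |h y| ≤ H)
    (ν : ℝ) (hν : ν = ∫ y, u y ∂q) (hνpos : 0 < ν)
    (μ : ℝ) (hμ : μ = (∫ y, u y * h y ∂q) / ν)
    (η : ℝ) (hη : η ∈ Set.Ioo (0:ℝ) 1)
    (hKbig : (2 * U ^ 2 / ν ^ 2) * Real.log (4 / η) ≤ (K : ℝ)) :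
    ENNReal.ofReal (1 - η) ≤
      ℙ {ω | |(∑ k, u (Y k ω) * h (Y k ω)) / (∑ k, u (Y k ω)) - μ|
          ≤ (4 * U * H / ν) * Real.sqrt (Real.log (4 / η) / (2 * K))} := by
  obtain ⟨hη0, hη1⟩ := hη
  have hKpos : (0:ℝ) < K := by exact_mod_cast hK
  set L : ℝ := Real.log (4 / η) with hL
  have hLpos : 0 < L := Real.log_pos (by rw [lt_div_iff₀ hη0]; linarith)
  set e : ℝ := Real.sqrt (L / (2 * K)) with he
  have he0 : 0 ≤ e := Real.sqrt_nonneg _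
  have he2 : e ^ 2 = L / (2 * K) := Real.sq_sqrt (by positivity)
  -- transfer a.e. facts
  have hYae : ∀ k, ∀ᵐ ω ∂ℙ, (0 ≤ u (Y k ω) ∧ u (Y k ω) ≤ U) ∧ |h (Y k ω)| ≤ H := by
    intro k
    exact ae_of_ae_map (p := fun y => (0 ≤ u y ∧ u y ≤ U) ∧ |h y| ≤ H)
      (hmeas k).aemeasurable (by rw [hlaw k]; exact huU.and hhH)
  -- integrability under q
  have hu_int : Integrable u q := by
    refine (integrable_const U).mono' hu.aestronglyMeasurable ?_
    filter_upwards [huU] with y hy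
    rw [Real.norm_eq_abs, abs_of_nonneg hy.1]; exact hy.2
  have hνU : ν ≤ U := by
    rw [hν]
    have : ∫ y, u y ∂q ≤ ∫ _y, U ∂q :=
      integral_mono_ae hu_int (integrable_const U) (by filter_upwards [huU] with y hy using hy.2)
    simpa using this
  have hU : 0 < U := lt_of_lt_of_le hνpos hνU
  have huh_int : Integrable (fun y => u y * h y) q := by
    refine (integrable_const (U * H)).mono' (hu.mul hh).aestronglyMeasurable ?_
    filter_upwards [huU, hhH] with y hy1 hy2
    rw [Real.norm_eq_abs, abs_mul, abs_of_nonneg hy1.1]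
    exact mul_le_mul hy1.2 hy2 (abs_nonneg _) hU.le
  have hH0 : 0 ≤ H := by
    have : (MeasureTheory.ae q).NeBot := ae_neBot.2 (IsProbabilityMeasure.ne_zero q)
    obtain ⟨y, hy⟩ := hhH.exists
    exact le_trans (abs_nonneg _) hy
  have hμH : |μ| ≤ H := by
    rw [hμ, abs_div, abs_of_pos hνpos, div_le_iff₀ hνpos]
    calc |∫ y, u y * h y ∂q| ≤ ∫ y, |u y| * |h y| ∂q := by
          simpa [Real.norm_eq_abs] using
            norm_integral_le_integral_norm (μ := q) (f := fun y => u y * h y)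
      _ ≤ ∫ y, H * u y ∂q := by
          refine integral_mono_ae (huh_int.abs.congr ?_) (hu_int.const_mul H) ?_
          · filter_upwards with y using abs_mul _ _
          · filter_upwards [huU, hhH] with y hy1 hy2
            rw [abs_of_nonneg hy1.1, mul_comm]
            exact mul_le_mul_of_nonneg_right hy2 hy1.1
      _ = H * ν := by rw [integral_const_mul, ← hν]
  have hμint : ∫ y, u y * h y ∂q = μ * ν := by rw [hμ]; field_simp
  -- handle H = 0
  rcases eq_or_lt_of_le hH0 with hH | hH
  · -- degenerate case H = 0 : h = 0 a.e.
    have hqh : ∀ᵐ y ∂q, h y = 0 := by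
      filter_upwards [hhH] with y hy
      rw [← hH] at hy
      exact abs_nonpos_iff.1 hy
    have hμ0 : μ = 0 := by
      rw [hμ]
      have hz : (fun y => u y * h y) =ᵐ[q] 0 := by
        filter_upwards [hqh] with y hy; simp [hy]
      rw [integral_congr_ae hz]; simp
    have hae : ∀ᵐ ω ∂ℙ, ∀ k, h (Y k ω) = 0 := by
      rw [MeasureTheory.ae_all_iff]
      intro k
      exact ae_of_ae_map (p := fun y => h y = 0)
        (hmeas k).aemeasurable (by rw [hlaw k]; exact hqh)
    have hsub : ∀ᵐ ω ∂ℙ, ω ∈ {ω | |(∑ k, u (Y k ω) * h (Y k ω)) / (∑ k, u (Y k ω)) - μ|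
          ≤ (4 * U * H / ν) * Real.sqrt (Real.log (4 / η) / (2 * K))} := by
      filter_upwards [hae] with ω hω
      have hnum : (∑ k, u (Y k ω) * h (Y k ω)) = 0 :=
        Finset.sum_eq_zero fun k _ => by rw [hω k, mul_zero]
      simp only [Set.mem_setOf_eq, hnum, zero_div, hμ0, sub_zero, abs_zero, ← hH]
      positivity
    calc ENNReal.ofReal (1 - η) ≤ 1 := ENNReal.ofReal_le_one.2 (by linarith)
      _ = ℙ Set.univ := measure_univ.symm
      _ ≤ _ := measure_mono_ae (hsub.mono fun ω hω _ => hω)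
  -- main case : 0 < H
  -- centered variables
  have hmap : ∀ (g : α → ℝ), Measurable g → ∀ k, ∫ ω, g (Y k ω) ∂ℙ = ∫ y, g y ∂q := by
    intro g hg k
    rw [← hlaw k]
    exact (integral_map (hmeas k).aemeasurable hg.aestronglyMeasurable).symm
  have hWint : ∀ k, Integrable (fun ω => u (Y k ω)) ℙ := by
    intro k
    refine (integrable_const U).mono' (hu.comp (hmeas k)).aestronglyMeasurable ?_
    filter_upwards [hYae k] with ω hω
    rw [Real.norm_eq_abs, abs_of_nonneg hω.1.1]; exact hω.1.2
  have huhYint : ∀ k, Integrable (fun ω => u (Y k ω) * h (Y k ω)) ℙ := by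
    intro k
    refine (integrable_const (U * H)).mono'
      ((hu.comp (hmeas k)).mul (hh.comp (hmeas k))).aestronglyMeasurable ?_
    filter_upwards [hYae k] with ω hω
    rw [Real.norm_eq_abs, abs_mul, abs_of_nonneg hω.1.1]
    exact mul_le_mul hω.1.2 hω.2 (abs_nonneg _) hU.le
  -- the four bad-event bounds
  have hq4 : Real.exp (-(2 * (K:ℝ) * e ^ 2)) = η / 4 := by
    have h1 : -(2 * (K:ℝ) * e ^ 2) = -L := by rw [he2]; field_simp
    rw [h1, Real.exp_neg, hL, Real.exp_log (by positivity), inv_div]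
  -- W = u∘Y - ν bounds
  have hmeasW : ∀ k, Measurable ((fun x => u x - ν) ∘ Y k) :=
    fun k => (hu.sub measurable_const).comp (hmeas k)
  have hindepW := hindep.comp (fun _ x => u x - ν) (fun _ => hu.sub measurable_const)
  have habW : ∀ k, ∀ᵐ ω ∂ℙ, ((fun x => u x - ν) ∘ Y k) ω ∈ Set.Icc (-ν) (U - ν) := by
    intro k
    filter_upwards [hYae k] with ω hω
    exact ⟨by simp [Function.comp]; linarith [hω.1.1], by simp [Function.comp]; linarith [hω.1.2]⟩
  have hmeanW : ∀ k, ∫ ω, ((fun x => u x - ν) ∘ Y k) ω ∂ℙ = 0 := by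
    intro k
    have : ∫ ω, ((fun x => u x - ν) ∘ Y k) ω ∂ℙ = ∫ ω, (u (Y k ω) - ν) ∂ℙ := rfl
    rw [this, integral_sub (hWint k) (integrable_const ν), hmap u hu k, integral_const]
    simp [← hν]
  have hmeasWn : ∀ k, Measurable ((fun x => ν - u x) ∘ Y k) :=
    fun k => (measurable_const.sub hu).comp (hmeas k)
  have hindepWn := hindep.comp (fun _ x => ν - u x) (fun _ => measurable_const.sub hu)
  have habWn : ∀ k, ∀ᵐ ω ∂ℙ, ((fun x => ν - u x) ∘ Y k) ω ∈ Set.Icc (ν - U) ν := by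
    intro k
    filter_upwards [hYae k] with ω hω
    exact ⟨by simp [Function.comp]; linarith [hω.1.2], by simp [Function.comp]; linarith [hω.1.1]⟩
  have hmeanWn : ∀ k, ∫ ω, ((fun x => ν - u x) ∘ Y k) ω ∂ℙ = 0 := by
    intro k
    have : ∫ ω, ((fun x => ν - u x) ∘ Y k) ω ∂ℙ = ∫ ω, (ν - u (Y k ω)) ∂ℙ := rfl
    rw [this, integral_sub (integrable_const ν) (hWint k), hmap u hu k, integral_const]
    simp [← hν]
  -- Z = u∘Y * (h∘Y - μ)
  have hZbound : ∀ ω' (_ : (0 ≤ u ω' ∧ u ω' ≤ U) ∧ |h ω'| ≤ H),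
      u ω' * (h ω' - μ) ∈ Set.Icc (U * (-H - μ)) (U * (H - μ)) := by
    intro x hx
    obtain ⟨⟨h1, h2⟩, h3⟩ := hx
    obtain ⟨h4, h5⟩ := abs_le.1 h3
    obtain ⟨h6, h7⟩ := abs_le.1 hμH
    constructor
    · nlinarith [mul_nonneg (sub_nonneg.2 h2) (by linarith : (0:ℝ) ≤ H + μ),
        mul_nonneg h1 (by linarith : (0:ℝ) ≤ H + h x)]
    · nlinarith [mul_nonneg (sub_nonneg.2 h2) (by linarith : (0:ℝ) ≤ H - μ),
        mul_nonneg h1 (by linarith : (0:ℝ) ≤ H - h x)]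
  have hmeasZ : ∀ k, Measurable ((fun x => u x * (h x - μ)) ∘ Y k) :=
    fun k => (hu.mul (hh.sub measurable_const)).comp (hmeas k)
  have hindepZ := hindep.comp (fun _ x => u x * (h x - μ))
    (fun _ => hu.mul (hh.sub measurable_const))
  have habZ : ∀ k, ∀ᵐ ω ∂ℙ,
      ((fun x => u x * (h x - μ)) ∘ Y k) ω ∈ Set.Icc (U * (-H - μ)) (U * (H - μ)) := by
    intro k
    filter_upwards [hYae k] with ω hω
    exact hZbound (Y k ω) hω
  have hZint : ∀ k, Integrable (fun ω => u (Y k ω) * (h (Y k ω) - μ)) ℙ := by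
    intro k
    have : (fun ω => u (Y k ω) * (h (Y k ω) - μ)) =
        fun ω => u (Y k ω) * h (Y k ω) - μ * u (Y k ω) := by funext ω; ring
    rw [this]
    exact (huhYint k).sub ((hWint k).const_mul μ)
  have hmeanZ : ∀ k, ∫ ω, ((fun x => u x * (h x - μ)) ∘ Y k) ω ∂ℙ = 0 := by
    intro k
    have h1 : ∫ ω, ((fun x => u x * (h x - μ)) ∘ Y k) ω ∂ℙ
        = ∫ ω, (u (Y k ω) * h (Y k ω) - μ * u (Y k ω)) ∂ℙ := by
      apply integral_congr_ae; filter_upwards with ω; simp [Function.comp]; ring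
    rw [h1, integral_sub (huhYint k) ((hWint k).const_mul μ),
      hmap (fun x => u x * h x) (hu.mul hh) k, integral_const_mul, hmap u hu k, ← hν, hμint]
    ring
  have hmeasZn : ∀ k, Measurable ((fun x => -(u x * (h x - μ))) ∘ Y k) :=
    fun k => (hu.mul (hh.sub measurable_const)).neg.comp (hmeas k)
  have hindepZn := hindep.comp (fun _ x => -(u x * (h x - μ)))
    (fun _ => (hu.mul (hh.sub measurable_const)).neg)
  have habZn : ∀ k, ∀ᵐ ω ∂ℙ,
      ((fun x => -(u x * (h x - μ))) ∘ Y k) ω ∈ Set.Icc (-(U * (H - μ))) (-(U * (-H - μ))) := by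
    intro k
    filter_upwards [hYae k] with ω hω
    obtain ⟨hl, hr⟩ := hZbound (Y k ω) hω
    exact ⟨by simp [Function.comp]; linarith, by simp [Function.comp]; linarith⟩
  have hmeanZn : ∀ k, ∫ ω, ((fun x => -(u x * (h x - μ))) ∘ Y k) ω ∂ℙ = 0 := by
    intro k
    have h1 : ∫ ω, ((fun x => -(u x * (h x - μ))) ∘ Y k) ω ∂ℙ
        = -∫ ω, ((fun x => u x * (h x - μ)) ∘ Y k) ω ∂ℙ := by
      rw [← integral_neg]; rfl
    rw [h1, hmeanZ k, neg_zero]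
  -- apply Chernoff
  have ht1 : (0:ℝ) ≤ 4 * e / U := by positivity
  have ht2 : (0:ℝ) ≤ 2 * e / (U * H) := by positivity
  have hexpW : -(4 * e / U) * (K * U * e)
      + K * ((4 * e / U) ^ 2 * ((U - ν) - -ν) ^ 2 / 8) = -(2 * (K:ℝ) * e ^ 2) := by
    field_simp; ring
  have hexpWn : -(4 * e / U) * (K * U * e)
      + K * ((4 * e / U) ^ 2 * (ν - (ν - U)) ^ 2 / 8) = -(2 * (K:ℝ) * e ^ 2) := by
    field_simp; ring
  have hexpZ : -(2 * e / (U * H)) * (K * (2 * U * H) * e)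
      + K * ((2 * e / (U * H)) ^ 2 * (U * (H - μ) - U * (-H - μ)) ^ 2 / 8)
      = -(2 * (K:ℝ) * e ^ 2) := by
    have : U * (H - μ) - U * (-H - μ) = 2 * U * H := by ring
    rw [this]; field_simp; ring
  have hexpZn : -(2 * e / (U * H)) * (K * (2 * U * H) * e)
      + K * ((2 * e / (U * H)) ^ 2 * (-(U * (-H - μ)) - -(U * (H - μ))) ^ 2 / 8)
      = -(2 * (K:ℝ) * e ^ 2) := by
    have : -(U * (-H - μ)) - -(U * (H - μ)) = 2 * U * H := by ring
    rw [this]; field_simp; ring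
  have hB1 : ℙ {ω | K * U * e ≤ ∑ k, (u (Y k ω) - ν)} ≤ ENNReal.ofReal (η / 4) := by
    have := chernoff_sum ℙ hmeasW hindepW habW hmeanW (K * U * e) ht1
    rw [hexpW, hq4] at this
    exact this
  have hB2 : ℙ {ω | K * U * e ≤ ∑ k, (ν - u (Y k ω))} ≤ ENNReal.ofReal (η / 4) := by
    have := chernoff_sum ℙ hmeasWn hindepWn habWn hmeanWn (K * U * e) ht1
    rw [hexpWn, hq4] at this
    exact this
  have hB3 : ℙ {ω | K * (2 * U * H) * e ≤ ∑ k, u (Y k ω) * (h (Y k ω) - μ)}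
      ≤ ENNReal.ofReal (η / 4) := by
    have := chernoff_sum ℙ hmeasZ hindepZ habZ hmeanZ (K * (2 * U * H) * e) ht2
    rw [hexpZ, hq4] at this
    exact this
  have hB4 : ℙ {ω | K * (2 * U * H) * e ≤ ∑ k, -(u (Y k ω) * (h (Y k ω) - μ))}
      ≤ ENNReal.ofReal (η / 4) := by
    have := chernoff_sum ℙ hmeasZn hindepZn habZn hmeanZn (K * (2 * U * H) * e) ht2
    rw [hexpZn, hq4] at this
    exact this
  -- good events
  set T1 : Set Ω := {ω | |∑ k, (u (Y k ω) - ν)| ≤ K * U * e} with hT1def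
  set T2 : Set Ω := {ω | |∑ k, u (Y k ω) * (h (Y k ω) - μ)| ≤ K * (2 * U * H) * e} with hT2def
  have hT1c : ℙ T1ᶜ ≤ ENNReal.ofReal (η / 2) := by
    have hsub : T1ᶜ ⊆ {ω | K * U * e ≤ ∑ k, (u (Y k ω) - ν)}
        ∪ {ω | K * U * e ≤ ∑ k, (ν - u (Y k ω))} := by
      intro ω hω
      simp only [hT1def, Set.mem_compl_iff, Set.mem_setOf_eq, not_le] at hω
      rcases abs_cases (∑ k, (u (Y k ω) - ν)) with ⟨h1, _⟩ | ⟨h1, _⟩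
      · left; simp only [Set.mem_setOf_eq]; linarith
      · right; simp only [Set.mem_setOf_eq]
        have h2 : ∑ k, (ν - u (Y k ω)) = -∑ k, (u (Y k ω) - ν) := by
          rw [← Finset.sum_neg_distrib]
          exact Finset.sum_congr rfl fun k _ => by ring
        rw [h2]; linarith
    calc ℙ T1ᶜ ≤ ℙ ({ω | K * U * e ≤ ∑ k, (u (Y k ω) - ν)}
          ∪ {ω | K * U * e ≤ ∑ k, (ν - u (Y k ω))}) := measure_mono hsub
      _ ≤ _ + _ := measure_union_le _ _
      _ ≤ ENNReal.ofReal (η / 4) + ENNReal.ofReal (η / 4) := add_le_add hB1 hB2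
      _ = ENNReal.ofReal (η / 2) := by
          rw [← ENNReal.ofReal_add (by linarith) (by linarith),
            show η / 4 + η / 4 = η / 2 by ring]
  have hT2c : ℙ T2ᶜ ≤ ENNReal.ofReal (η / 2) := by
    have hsub : T2ᶜ ⊆ {ω | K * (2 * U * H) * e ≤ ∑ k, u (Y k ω) * (h (Y k ω) - μ)}
        ∪ {ω | K * (2 * U * H) * e ≤ ∑ k, -(u (Y k ω) * (h (Y k ω) - μ))} := by
      intro ω hω
      simp only [hT2def, Set.mem_compl_iff, Set.mem_setOf_eq, not_le] at hω
      rcases abs_cases (∑ k, u (Y k ω) * (h (Y k ω) - μ)) with ⟨h1, _⟩ | ⟨h1, _⟩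
      · left; simp only [Set.mem_setOf_eq]; linarith
      · right; simp only [Set.mem_setOf_eq]
        have h2 : ∑ k, -(u (Y k ω) * (h (Y k ω) - μ))
            = -∑ k, u (Y k ω) * (h (Y k ω) - μ) := by rw [← Finset.sum_neg_distrib]
        rw [h2]; linarith
    calc ℙ T2ᶜ ≤ _ := measure_mono hsub
      _ ≤ _ + _ := measure_union_le _ _
      _ ≤ ENNReal.ofReal (η / 4) + ENNReal.ofReal (η / 4) := add_le_add hB3 hB4
      _ = ENNReal.ofReal (η / 2) := by
          rw [← ENNReal.ofReal_add (by linarith) (by linarith),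
            show η / 4 + η / 4 = η / 2 by ring]
  -- U * e ≤ ν / 2
  have hUe : U * e ≤ ν / 2 := by
    have h2 : 2 * U ^ 2 * L ≤ K * ν ^ 2 := by
      rw [div_mul_eq_mul_div, div_le_iff₀ (by positivity)] at hKbig
      linarith
    have h4 : (U * e) ^ 2 ≤ (ν / 2) ^ 2 := by
      rw [mul_pow, he2, div_pow, ← mul_div_assoc,
        div_le_div_iff₀ (by positivity) (by positivity)]
      nlinarith
    calc U * e = Real.sqrt ((U * e) ^ 2) := (Real.sqrt_sq (by positivity)).symm
      _ ≤ Real.sqrt ((ν / 2) ^ 2) := Real.sqrt_le_sqrt h4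
      _ = ν / 2 := Real.sqrt_sq (by positivity)
  -- T1 ∩ T2 ⊆ target event
  have hTS : T1 ∩ T2 ⊆ {ω | |(∑ k, u (Y k ω) * h (Y k ω)) / (∑ k, u (Y k ω)) - μ|
      ≤ (4 * U * H / ν) * Real.sqrt (Real.log (4 / η) / (2 * K))} := by
    rintro ω ⟨hω1, hω2⟩
    simp only [hT1def, Set.mem_setOf_eq] at hω1
    simp only [hT2def, Set.mem_setOf_eq] at hω2
    simp only [Set.mem_setOf_eq]
    set s1 : ℝ := ∑ k, u (Y k ω) with hs1
    have hsW : ∑ k, (u (Y k ω) - ν) = s1 - K * ν := by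
      rw [Finset.sum_sub_distrib, Finset.sum_const, Finset.card_univ, Fintype.card_fin,
        nsmul_eq_mul, hs1]
    rw [hsW] at hω1
    have hs1lb : K * ν / 2 ≤ s1 := by
      have := (abs_le.1 hω1).1
      have hKUe : K * (U * e) ≤ K * (ν / 2) :=
        mul_le_mul_of_nonneg_left hUe hKpos.le
      nlinarith
    have hs1pos : 0 < s1 := lt_of_lt_of_le (by positivity) hs1lb
    have hnum : (∑ k, u (Y k ω) * h (Y k ω)) - μ * s1 = ∑ k, u (Y k ω) * (h (Y k ω) - μ) := by
      rw [hs1, Finset.mul_sum, ← Finset.sum_sub_distrib]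
      exact Finset.sum_congr rfl fun k _ => by ring
    have hdiff : (∑ k, u (Y k ω) * h (Y k ω)) / s1 - μ
        = (∑ k, u (Y k ω) * (h (Y k ω) - μ)) / s1 := by
      rw [← hnum, sub_div, mul_div_assoc, div_self hs1pos.ne', mul_one]
    rw [hdiff, abs_div, abs_of_pos hs1pos]
    calc |∑ k, u (Y k ω) * (h (Y k ω) - μ)| / s1
        ≤ (K * (2 * U * H) * e) / (K * ν / 2) :=
          div_le_div₀ (by positivity) hω2 (by positivity) hs1lb
      _ = (4 * U * H / ν) * e := by field_simp; ring
  -- measurability of T1, T2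
  have hT1m : MeasurableSet T1 := by
    apply measurableSet_le _ measurable_const
    exact (Finset.measurable_sum Finset.univ
      fun k _ => (hu.comp (hmeas k)).sub measurable_const).abs
  have hT2m : MeasurableSet T2 := by
    apply measurableSet_le _ measurable_const
    exact (Finset.measurable_sum Finset.univ
      fun k _ => ((hu.comp (hmeas k)).mul ((hh.comp (hmeas k)).sub measurable_const))).abs
  have hTc : ℙ (T1 ∩ T2)ᶜ ≤ ENNReal.ofReal η := by
    rw [Set.compl_inter]
    calc ℙ (T1ᶜ ∪ T2ᶜ) ≤ ℙ T1ᶜ + ℙ T2ᶜ := measure_union_le _ _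
      _ ≤ ENNReal.ofReal (η / 2) + ENNReal.ofReal (η / 2) := add_le_add hT1c hT2c
      _ = ENNReal.ofReal η := by
          rw [← ENNReal.ofReal_add (by linarith) (by linarith),
            show η / 2 + η / 2 = η by ring]
  calc ENNReal.ofReal (1 - η) = 1 - ENNReal.ofReal η := by
        rw [ENNReal.ofReal_sub _ hη0.le, ENNReal.ofReal_one]
    _ ≤ 1 - ℙ (T1 ∩ T2)ᶜ := tsub_le_tsub_left hTc 1
    _ ≤ ℙ (T1 ∩ T2) := by
        rw [tsub_le_iff_right]
        have h1 : (1:ENNReal) ≤ ℙ (T1 ∩ T2) + ℙ (T1 ∩ T2)ᶜ := by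
          rw [← measure_univ (μ := ℙ)]
          rw [← Set.union_compl_self (T1 ∩ T2)]
          exact measure_union_le _ _
        exact h1
    _ ≤ _ := measure_mono hTS
end

section
/- Fix n ≥ 3, p ∈ [1,∞] with dual exponent q (1/p + 1/q = 1), and δ ≥ 0. For π ∈ Δ_n and the vertex bonus factor b_{p,i}(π) = ‖eᵢ − π‖_q, the worst-case regret over ℓ_p-bounded perturbations satisfies max_{‖Δ‖_p ≤ δ} Reg(π, r̂ + Δ) = max_i { r̂ᵢ − ⟨π, r̂⟩ + δ b_{p,i}(π) }. Moreover b_{p,i}(π) is a function of πᵢ alone for all π ∈ Δ_n if and only if p ∈ {1, ∞}, with b_{1,i}(π) = 1 − πᵢ and b_{∞,i}(π) = 2(1 − πᵢ). -/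
open scoped BigOperators ENNReal

/-- The ℓ_p norm of a vector in ℝⁿ, for p ∈ [1, ∞]. -/
noncomputable def lpNorm {n : ℕ} (p : ℝ≥0∞) (x : Fin n → ℝ) : ℝ :=
  if p = ∞ then ⨆ i, |x i| else (∑ i, |x i| ^ p.toReal) ^ (1 / p.toReal)

lemma lpNorm_nonneg {n : ℕ} (p : ℝ≥0∞) (x : Fin n → ℝ) : 0 ≤ lpNorm p x := by
  unfold lpNorm
  split
  · exact Real.iSup_nonneg fun i => abs_nonneg _
  · exact Real.rpow_nonneg (Finset.sum_nonneg fun i _ => Real.rpow_nonneg (abs_nonneg _) _) _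

lemma lpNorm_top {n : ℕ} (x : Fin n → ℝ) : lpNorm ∞ x = ⨆ i, |x i| := by simp [lpNorm]

lemma lpNorm_one {n : ℕ} (x : Fin n → ℝ) : lpNorm 1 x = ∑ i, |x i| := by
  simp [lpNorm, ENNReal.toReal_one]

lemma lpNorm_ne_top {n : ℕ} {p : ℝ≥0∞} (hp : p ≠ ∞) (x : Fin n → ℝ) :
    lpNorm p x = (∑ i, |x i| ^ p.toReal) ^ (1 / p.toReal) := by simp [lpNorm, hp]

lemma conj_cases {p q : ℝ≥0∞} (hpq : ENNReal.HolderConjugate p q) :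
    (p = 1 ∧ q = ∞) ∨ (p = ∞ ∧ q = 1) ∨
    (p ≠ ∞ ∧ q ≠ ∞ ∧ Real.HolderConjugate p.toReal q.toReal) := by
  have h := ENNReal.HolderConjugate.inv_add_inv_eq_one p q
  rcases eq_or_ne p 1 with rfl | hp1
  · left; refine ⟨rfl, ?_⟩
    rw [inv_one] at h
    have : q⁻¹ = 0 := by
      have := ENNReal.add_right_inj (a := (1:ℝ≥0∞)) (b := q⁻¹) (c := 0) ENNReal.one_ne_top
      simpa using this.1 (by simpa using h)
    simpa using (ENNReal.inv_eq_zero).1 this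
  rcases eq_or_ne p ∞ with rfl | hptop
  · right; left; refine ⟨rfl, ?_⟩
    rw [ENNReal.inv_top, zero_add] at h
    exact ENNReal.inv_eq_one.1 h
  · right; right
    have hp : 1 < p := lt_of_le_of_ne (ENNReal.HolderConjugate.one_le p q) (Ne.symm hp1)
    have hq1 : q ≠ 1 := by
      rintro rfl
      rw [inv_one] at h
      have : p⁻¹ = 0 := by
        have := ENNReal.add_left_inj (a := (1:ℝ≥0∞)) (b := p⁻¹) (c := 0) ENNReal.one_ne_top
        simpa using this.1 (by simpa using h)
      exact hptop (by simpa using (ENNReal.inv_eq_zero).1 this)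
    have hqtop : q ≠ ∞ := by
      rintro rfl
      rw [ENNReal.inv_top, add_zero] at h
      exact hp1 (by simpa using (ENNReal.inv_eq_one).1 h)
    refine ⟨hptop, hqtop, Real.holderConjugate_iff.2 ⟨?_, ?_⟩⟩
    · exact (ENNReal.toReal_lt_toReal ENNReal.one_ne_top hptop).2 (by simpa using hp)
    · have hp0 : p ≠ 0 := ENNReal.HolderConjugate.ne_zero p q
      have hq0 : q ≠ 0 := ENNReal.HolderConjugate.ne_zero q p
      have := congrArg ENNReal.toReal h
      rw [ENNReal.toReal_add (by simp [hp0]) (by simp [hq0]), ENNReal.toReal_inv,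
        ENNReal.toReal_inv, ENNReal.toReal_one] at this
      exact this

lemma lp_holder {n : ℕ} {p q : ℝ≥0∞} (hpq : ENNReal.HolderConjugate p q) (x y : Fin n → ℝ) :
    ∑ j, x j * y j ≤ lpNorm p x * lpNorm q y := by
  have key : ∀ (u v : Fin n → ℝ), ∑ j, u j * v j ≤ lpNorm 1 u * lpNorm ∞ v := by
    intro u v
    rw [lpNorm_one, lpNorm_top, Finset.sum_mul]
    refine Finset.sum_le_sum fun j _ => ?_
    calc u j * v j ≤ |u j * v j| := le_abs_self _
    _ = |u j| * |v j| := abs_mul _ _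
    _ ≤ |u j| * ⨆ i, |v i| := by
        exact mul_le_mul_of_nonneg_left (le_ciSup (f := fun i => |v i|) (Set.finite_range _).bddAbove j) (abs_nonneg _)
  rcases conj_cases hpq with ⟨rfl, rfl⟩ | ⟨rfl, rfl⟩ | ⟨hpt, hqt, hr⟩
  · exact key x y
  · calc ∑ j, x j * y j = ∑ j, y j * x j := by simp [mul_comm]
      _ ≤ lpNorm 1 y * lpNorm ∞ x := key y x
      _ = lpNorm ∞ x * lpNorm 1 y := mul_comm _ _
  · rw [lpNorm_ne_top hpt, lpNorm_ne_top hqt]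
    exact Real.inner_le_Lp_mul_Lq Finset.univ x y hr

lemma exists_dual {n : ℕ} [Nonempty (Fin n)] {p q : ℝ≥0∞}
    (hpq : ENNReal.HolderConjugate p q) {δ : ℝ} (hδ : 0 ≤ δ) (y : Fin n → ℝ) :
    ∃ Δ : Fin n → ℝ, lpNorm p Δ ≤ δ ∧ ∑ j, y j * Δ j = δ * lpNorm q y := by
  rcases conj_cases hpq with ⟨rfl, rfl⟩ | ⟨rfl, rfl⟩ | ⟨hpt, hqt, hr⟩
  · -- p = 1, q = ∞
    obtain ⟨j₀, hj₀⟩ := Finite.exists_max (fun j => |y j|)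
    have hsup : lpNorm ∞ y = |y j₀| := by
      rw [lpNorm_top]
      exact le_antisymm (ciSup_le hj₀)
        (le_ciSup (f := fun i => |y i|) (Set.finite_range _).bddAbove j₀)
    set v : ℝ := if 0 ≤ y j₀ then δ else -δ with hv
    have habsv : |v| = δ := by
      rw [hv]; rcases le_or_gt 0 (y j₀) with h | h
      · rw [if_pos h, abs_of_nonneg hδ]
      · rw [if_neg (not_le.2 h), abs_neg, abs_of_nonneg hδ]
    refine ⟨fun j => if j = j₀ then v else 0, ?_, ?_⟩
    · rw [lpNorm_one]
      have habs : ∀ j, |(if j = j₀ then v else 0 : ℝ)| = if j = j₀ then δ else 0 := by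
        intro j
        rcases eq_or_ne j j₀ with rfl | hj
        · rw [if_pos rfl, if_pos rfl, habsv]
        · rw [if_neg hj, if_neg hj, abs_zero]
      simp only [habs, Finset.sum_ite_eq' Finset.univ j₀, Finset.mem_univ, if_true, le_refl]
    · rw [hsup]
      have hval : ∀ j, y j * (if j = j₀ then v else 0 : ℝ) = if j = j₀ then y j₀ * v else 0 := by
        intro j
        rcases eq_or_ne j j₀ with rfl | hj
        · rw [if_pos rfl, if_pos rfl]
        · rw [if_neg hj, if_neg hj, mul_zero]
      simp only [hval, Finset.sum_ite_eq' Finset.univ j₀, Finset.mem_univ, if_true]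
      rw [hv]
      rcases le_or_gt 0 (y j₀) with h | h
      · rw [if_pos h, abs_of_nonneg h]; ring
      · rw [if_neg (not_le.2 h), abs_of_neg h]; ring
  · -- p = ∞, q = 1
    refine ⟨fun j => if 0 ≤ y j then δ else -δ, ?_, ?_⟩
    · rw [lpNorm_top]
      refine ciSup_le fun j => ?_
      split <;> simp [abs_of_nonneg, abs_of_nonpos, hδ]
    · rw [lpNorm_one, Finset.mul_sum]
      refine Finset.sum_congr rfl fun j _ => ?_
      rcases le_or_gt 0 (y j) with h | h
      · simp only [if_pos h, abs_of_nonneg h]; ring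
      · simp only [if_neg (not_le.2 h), abs_of_neg h]; ring
  · -- 1 < p, q < ∞
    set pr := p.toReal with hpr
    set qr := q.toReal with hqr
    have hppos : 0 < pr := hr.pos
    have hqpos : 0 < qr := hr.symm.pos
    by_cases hy : y = 0
    · refine ⟨0, ?_, ?_⟩
      · rw [lpNorm_ne_top hpt, ← hpr]
        simp only [Pi.zero_apply, abs_zero, Real.zero_rpow hppos.ne', Finset.sum_const,
          smul_zero]
        rw [Real.zero_rpow (by positivity : 1/pr ≠ 0)]
        exact hδ
      · rw [lpNorm_ne_top hqt, ← hqr]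
        subst hy
        simp only [Pi.zero_apply, abs_zero, Real.zero_rpow hqpos.ne', Finset.sum_const,
          smul_zero, mul_zero, zero_mul]
        rw [Real.zero_rpow (by positivity : 1/qr ≠ 0)]
        simp
    · obtain ⟨j₀, hj₀⟩ := Function.ne_iff.1 hy
      have hj₀' : y j₀ ≠ 0 := by simpa using hj₀
      set A := ∑ j, |y j| ^ qr with hA
      have hApos : 0 < A := by
        refine Finset.sum_pos' (fun j _ => Real.rpow_nonneg (abs_nonneg _) _)
          ⟨j₀, Finset.mem_univ _, Real.rpow_pos_of_pos (abs_pos.2 hj₀') _⟩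
      set c := δ / A ^ (1/pr) with hc
      have hcnn : 0 ≤ c := div_nonneg hδ (Real.rpow_nonneg hApos.le _)
      have hmul : (qr - 1) * pr = qr := by
        have h1 := hr.inv_add_inv_eq_one
        have h2 : pr ≠ 0 := hppos.ne'
        have h3 : qr ≠ 0 := hqpos.ne'
        field_simp at h1
        nlinarith
      have habsq : ∀ j, |y j| * |y j| ^ (qr - 1) = |y j| ^ qr := by
        intro j
        rcases eq_or_ne (y j) 0 with h | h
        · simp [h, Real.zero_rpow hqpos.ne']
        · rw [show qr = 1 + (qr - 1) by ring, Real.rpow_add (abs_pos.2 h), Real.rpow_one]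
          rw [show (1:ℝ) + (qr - 1) - 1 = qr - 1 by ring]
      refine ⟨fun j => c * ((if 0 ≤ y j then (1:ℝ) else -1) * |y j| ^ (qr - 1)), ?_, ?_⟩
      · rw [lpNorm_ne_top hpt, ← hpr]
        have habs : ∀ j, |c * ((if 0 ≤ y j then (1:ℝ) else -1) * |y j| ^ (qr - 1))| ^ pr
            = c ^ pr * |y j| ^ qr := by
          intro j
          have h1 : |c * ((if 0 ≤ y j then (1:ℝ) else -1) * |y j| ^ (qr - 1))|
              = c * |y j| ^ (qr - 1) := by
            rw [abs_mul, abs_mul, abs_of_nonneg hcnn,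
              abs_of_nonneg (Real.rpow_nonneg (abs_nonneg _) _)]
            split <;> simp
          rw [h1, Real.mul_rpow hcnn (Real.rpow_nonneg (abs_nonneg _) _),
            ← Real.rpow_mul (abs_nonneg _), hmul]
        simp only [habs]
        rw [← Finset.mul_sum, ← hA, Real.mul_rpow (Real.rpow_nonneg hcnn _) hApos.le,
          ← Real.rpow_mul hcnn, mul_one_div, div_self hppos.ne', Real.rpow_one, hc,
          div_mul_cancel₀ _ (Real.rpow_pos_of_pos hApos _).ne']
      · have hval : ∀ j, y j * (c * ((if 0 ≤ y j then (1:ℝ) else -1) * |y j| ^ (qr - 1)))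
            = c * |y j| ^ qr := by
          intro j
          rcases le_or_gt 0 (y j) with h | h
          · rw [if_pos h, ← habsq j, abs_of_nonneg h]; ring
          · rw [if_neg (not_le.2 h), ← habsq j, abs_of_neg h]; ring
        have hAA : A / A ^ (1/pr) = A ^ (1/qr) := by
          rw [show A / A ^ (1/pr) = A ^ (1:ℝ) / A ^ (1/pr) by rw [Real.rpow_one],
            ← Real.rpow_sub hApos]
          congr 1
          have h1 := hr.inv_add_inv_eq_one
          rw [one_div, one_div]; linarith
        simp only [hval]
        rw [← Finset.mul_sum, ← hA, lpNorm_ne_top hqt, ← hqr, ← hA, hc, ← hAA]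
        ring

lemma simplex_le_one {n : ℕ} {π : Fin n → ℝ} (hπ : π ∈ stdSimplex ℝ (Fin n)) (i : Fin n) :
    π i ≤ 1 := by
  rw [← hπ.2]
  exact Finset.single_le_sum (fun j _ => hπ.1 j) (Finset.mem_univ i)

lemma simplex_pair {n : ℕ} {π : Fin n → ℝ} (hπ : π ∈ stdSimplex ℝ (Fin n)) {i j : Fin n}
    (hij : j ≠ i) : π j ≤ 1 - π i := by
  have h : π i + π j ≤ 1 := by
    rw [← hπ.2]
    have := Finset.sum_le_sum_of_subset_of_nonneg (Finset.subset_univ {i, j})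
      (fun k _ _ => hπ.1 k)
    rwa [Finset.sum_pair (Ne.symm hij)] at this
  linarith

lemma bonus_top {n : ℕ} {π : Fin n → ℝ} (hπ : π ∈ stdSimplex ℝ (Fin n)) (i : Fin n) :
    lpNorm ∞ (fun j => (if j = i then (1:ℝ) else 0) - π j) = 1 - π i := by
  haveI : Nonempty (Fin n) := by
    rcases Nat.eq_zero_or_pos n with rfl | h
    · exfalso; have := hπ.2; simp at this
    · exact ⟨⟨0, h⟩⟩
  rw [lpNorm_top]
  have hi : |(if i = i then (1:ℝ) else 0) - π i| = 1 - π i := by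
    rw [if_pos rfl, abs_of_nonneg (by linarith [simplex_le_one hπ i])]
  refine le_antisymm (ciSup_le fun j => ?_) ?_
  · rcases eq_or_ne j i with rfl | hj
    · rw [hi]
    · rw [if_neg hj, zero_sub, abs_neg, abs_of_nonneg (hπ.1 j)]
      exact simplex_pair hπ hj
  · rw [← hi]
    exact le_ciSup (f := fun j => |(if j = i then (1:ℝ) else 0) - π j|)
      (Set.finite_range _).bddAbove i

lemma bonus_one {n : ℕ} {π : Fin n → ℝ} (hπ : π ∈ stdSimplex ℝ (Fin n)) (i : Fin n) :
    lpNorm 1 (fun j => (if j = i then (1:ℝ) else 0) - π j) = 2 * (1 - π i) := by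
  rw [lpNorm_one]
  have habs : ∀ j, |(if j = i then (1:ℝ) else 0) - π j|
      = (if j = i then (1 - 2 * π i) else 0) + π j := by
    intro j
    rcases eq_or_ne j i with rfl | hj
    · rw [if_pos rfl, if_pos rfl, abs_of_nonneg (by linarith [simplex_le_one hπ j])]
      ring
    · rw [if_neg hj, if_neg hj, zero_sub, abs_neg, abs_of_nonneg (hπ.1 j), zero_add]
  simp only [habs]
  rw [Finset.sum_add_distrib, Finset.sum_ite_eq' Finset.univ i, hπ.2]
  simp only [Finset.mem_univ, if_true]
  ring

lemma part1 {n : ℕ} (hn : 3 ≤ n) {p q : ℝ≥0∞} (hpq : ENNReal.HolderConjugate p q)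
    {δ : ℝ} (hδ : 0 ≤ δ) (r : Fin n → ℝ) {π : Fin n → ℝ} (hπ : π ∈ stdSimplex ℝ (Fin n)) :
    IsGreatest
      {v : ℝ | ∃ Δ : Fin n → ℝ, lpNorm p Δ ≤ δ ∧
        ∃ β ∈ stdSimplex ℝ (Fin n), v = ∑ i, (β i - π i) * (r i + Δ i)}
      (⨆ i : Fin n, (r i - (∑ j, π j * r j)
        + δ * lpNorm q (fun j => (if j = i then (1:ℝ) else 0) - π j))) := by
  haveI : Nonempty (Fin n) := ⟨⟨0, by omega⟩⟩
  set R : ℝ := ∑ j, π j * r j with hR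
  set g : Fin n → ℝ := fun i => r i - R
    + δ * lpNorm q (fun j => (if j = i then (1:ℝ) else 0) - π j) with hg
  set S : ℝ := ⨆ i, g i with hS
  have hgS : ∀ i, g i ≤ S := fun i => le_ciSup (Set.finite_range g).bddAbove i
  constructor
  · -- membership
    obtain ⟨i₀, hi₀⟩ := Finite.exists_max g
    have hSi : S = g i₀ := le_antisymm (ciSup_le hi₀) (hgS i₀)
    obtain ⟨Δ, hΔ, hdual⟩ := exists_dual hpq hδ (fun j => (if j = i₀ then (1:ℝ) else 0) - π j)
    refine ⟨Δ, hΔ, fun j => if j = i₀ then (1:ℝ) else 0, ?_, ?_⟩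
    · simpa only [eq_comm] using ite_eq_mem_stdSimplex ℝ i₀
    · rw [hSi, hg]
      have expand : ∀ j, ((if j = i₀ then (1:ℝ) else 0) - π j) * (r j + Δ j)
          = (if j = i₀ then (1:ℝ) else 0) * r j - π j * r j
            + ((if j = i₀ then (1:ℝ) else 0) - π j) * Δ j := by intro j; ring
      rw [Finset.sum_congr rfl fun j _ => expand j, Finset.sum_add_distrib,
        Finset.sum_sub_distrib, hdual]
      simp only [ite_mul, one_mul, zero_mul, Finset.sum_ite_eq' Finset.univ i₀,
        Finset.mem_univ, if_true]
      rfl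
  · -- upper bound
    rintro v ⟨Δ, hΔ, β, hβ, rfl⟩
    have key : ∀ j, (r j + Δ j) - (R + ∑ k, π k * Δ k) ≤ S := by
      intro j
      have h1 : ∑ k, Δ k * ((if k = j then (1:ℝ) else 0) - π k)
          = Δ j - ∑ k, π k * Δ k := by
        have : ∀ k, Δ k * ((if k = j then (1:ℝ) else 0) - π k)
            = (if k = j then Δ j else 0) - π k * Δ k := by
          intro k
          rcases eq_or_ne k j with rfl | hk
          · rw [if_pos rfl, if_pos rfl]; ring
          · rw [if_neg hk, if_neg hk]; ring
        rw [Finset.sum_congr rfl fun k _ => this k, Finset.sum_sub_distrib,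
          Finset.sum_ite_eq' Finset.univ j]
        simp
      have h2 : Δ j - ∑ k, π k * Δ k
          ≤ δ * lpNorm q (fun k => (if k = j then (1:ℝ) else 0) - π k) := by
        rw [← h1]
        calc ∑ k, Δ k * ((if k = j then (1:ℝ) else 0) - π k)
            ≤ lpNorm p Δ * lpNorm q (fun k => (if k = j then (1:ℝ) else 0) - π k) :=
              lp_holder hpq _ _
          _ ≤ δ * lpNorm q (fun k => (if k = j then (1:ℝ) else 0) - π k) :=
              mul_le_mul_of_nonneg_right hΔ (lpNorm_nonneg _ _)
      have h3 : r j - R + δ * lpNorm q (fun k => (if k = j then (1:ℝ) else 0) - π k) ≤ S :=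
        hgS j
      linarith
    have hsum : ∑ i, (β i - π i) * (r i + Δ i)
        = ∑ i, β i * ((r i + Δ i) - (R + ∑ k, π k * Δ k)) := by
      have e1 : ∀ i, (β i - π i) * (r i + Δ i)
          = β i * (r i + Δ i) - π i * r i - π i * Δ i := by intro i; ring
      have e2 : ∀ i, β i * ((r i + Δ i) - (R + ∑ k, π k * Δ k))
          = β i * (r i + Δ i) - β i * (R + ∑ k, π k * Δ k) := by intro i; ring
      rw [Finset.sum_congr rfl fun i _ => e1 i, Finset.sum_congr rfl fun i _ => e2 i,
        Finset.sum_sub_distrib, Finset.sum_sub_distrib, Finset.sum_sub_distrib,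
        ← Finset.sum_mul, hβ.2, one_mul, ← hR]
      ring
    rw [hsum]
    calc ∑ i, β i * ((r i + Δ i) - (R + ∑ k, π k * Δ k))
        ≤ ∑ i, β i * S := Finset.sum_le_sum fun i _ =>
          mul_le_mul_of_nonneg_left (key i) (hβ.1 i)
      _ = S := by rw [← Finset.sum_mul, hβ.2, one_mul]

lemma part2_core {n : ℕ} (hn : 3 ≤ n) {q : ℝ≥0∞} (hqt : q ≠ ∞) (hq1 : 1 < q.toReal)
    (i0 : Fin n)
    (H : ∃ f : ℝ → ℝ, ∀ π ∈ stdSimplex ℝ (Fin n),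
      lpNorm q (fun j => (if j = i0 then (1:ℝ) else 0) - π j) = f (π i0)) :
    False := by
  obtain ⟨f, hf⟩ := H
  set qr := q.toReal with hqr
  have hq0 : 0 < qr := lt_trans one_pos hq1
  obtain ⟨i1, hi1⟩ : ∃ i1 : Fin n, i1 ≠ i0 := by
    rcases eq_or_ne i0 ⟨0, by omega⟩ with rfl | h
    · exact ⟨⟨1, by omega⟩, by intro heq; simpa using congrArg Fin.val heq⟩
    · exact ⟨⟨0, by omega⟩, Ne.symm h⟩
  set m : ℝ := (n : ℝ) - 1 with hm
  have hm2 : (2:ℝ) ≤ m := by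
    have : (3:ℝ) ≤ (n:ℝ) := by exact_mod_cast hn
    linarith
  have hm0 : 0 < m := by linarith
  set d : ℝ := 1 / (2 * m) with hd
  have hd0 : 0 < d := by positivity
  set c : ℝ := (1/2 : ℝ) ^ qr with hc
  have hc0 : 0 < c := Real.rpow_pos_of_pos one_half_pos _
  -- the two test distributions
  set π₁ : Fin n → ℝ := fun j => if j = i0 then 1/2 else if j = i1 then 1/2 else 0 with hπ₁
  set π₂ : Fin n → ℝ := fun j => if j = i0 then 1/2 else d with hπ₂
  have hπ₁mem : π₁ ∈ stdSimplex ℝ (Fin n) := by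
    constructor
    · intro j; rw [hπ₁]; dsimp only
      split
      · norm_num
      · split <;> norm_num
    · have : ∀ j, π₁ j = (if j = i0 then (1/2:ℝ) else 0) + (if j = i1 then (1/2:ℝ) else 0) := by
        intro j; rw [hπ₁]; dsimp only
        rcases eq_or_ne j i0 with rfl | h0
        · rw [if_pos rfl, if_pos rfl, if_neg (Ne.symm hi1 : ¬ j = i1)]; norm_num
        · rw [if_neg h0, if_neg h0]; split <;> norm_num
      rw [Finset.sum_congr rfl fun j _ => this j, Finset.sum_add_distrib,
        Finset.sum_ite_eq' Finset.univ i0, Finset.sum_ite_eq' Finset.univ i1]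
      simp; norm_num
  have hπ₂mem : π₂ ∈ stdSimplex ℝ (Fin n) := by
    constructor
    · intro j; rw [hπ₂]; dsimp only
      split
      · norm_num
      · positivity
    · have : ∀ j, π₂ j = (if j = i0 then (1/2 - d : ℝ) else 0) + d := by
        intro j; rw [hπ₂]; dsimp only; split <;> ring
      rw [Finset.sum_congr rfl fun j _ => this j, Finset.sum_add_distrib,
        Finset.sum_ite_eq' Finset.univ i0, Finset.sum_const, Finset.card_univ, Fintype.card_fin]
      simp only [Finset.mem_univ, if_true, nsmul_eq_mul]
      have hn' : (n:ℝ) = m + 1 := by rw [hm]; ring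
      have hmd : m * d = 1/2 := by rw [hd]; field_simp
      rw [hn', add_mul, one_mul]
      linarith
  -- norms
  have hb₁ : lpNorm q (fun j => (if j = i0 then (1:ℝ) else 0) - π₁ j) = (2*c) ^ (1/qr) := by
    rw [lpNorm_ne_top hqt, ← hqr]
    congr 1
    have : ∀ j, |(if j = i0 then (1:ℝ) else 0) - π₁ j| ^ qr
        = (if j = i0 then c else 0) + (if j = i1 then c else 0) := by
      intro j; rw [hπ₁]; dsimp only
      rcases eq_or_ne j i0 with rfl | h0
      · rw [if_pos rfl, if_pos rfl, if_pos rfl, if_neg (Ne.symm hi1 : ¬ j = i1)]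
        norm_num [hc, abs_of_nonneg]
      · rcases eq_or_ne j i1 with rfl | h1
        · rw [if_neg h0, if_neg h0, if_neg h0, if_pos rfl, if_pos rfl]
          rw [hc]; norm_num [abs_of_nonpos]
        · rw [if_neg h0, if_neg h0, if_neg h0, if_neg h1, if_neg h1]
          simp [Real.zero_rpow hq0.ne']
    rw [Finset.sum_congr rfl fun j _ => this j, Finset.sum_add_distrib,
      Finset.sum_ite_eq' Finset.univ i0, Finset.sum_ite_eq' Finset.univ i1]
    simp; ring
  have hb₂ : lpNorm q (fun j => (if j = i0 then (1:ℝ) else 0) - π₂ j)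
      = (c + m * d ^ qr) ^ (1/qr) := by
    rw [lpNorm_ne_top hqt, ← hqr]
    congr 1
    have : ∀ j, |(if j = i0 then (1:ℝ) else 0) - π₂ j| ^ qr
        = (if j = i0 then c - d ^ qr else 0) + d ^ qr := by
      intro j; rw [hπ₂]; dsimp only
      rcases eq_or_ne j i0 with rfl | h0
      · rw [if_pos rfl, if_pos rfl, if_pos rfl]
        rw [hc]; norm_num [abs_of_nonneg]
      · rw [if_neg h0, if_neg h0, if_neg h0, zero_sub, abs_neg, abs_of_nonneg hd0.le,
          zero_add]
    rw [Finset.sum_congr rfl fun j _ => this j, Finset.sum_add_distrib,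
      Finset.sum_ite_eq' Finset.univ i0, Finset.sum_const, Finset.card_univ, Fintype.card_fin]
    simp only [Finset.mem_univ, if_true, nsmul_eq_mul]
    have hn' : (n:ℝ) = m + 1 := by rw [hm]; ring
    rw [hn']; ring
  -- strict inequality
  have hkey : m * d ^ qr < c := by
    have hdq : d ^ qr = c * (m ^ qr)⁻¹ := by
      rw [hd, hc, one_div, mul_inv, Real.mul_rpow (by norm_num) (by positivity),
        Real.inv_rpow hm0.le, ← one_div]
    rw [hdq, ← mul_assoc, mul_comm m c, mul_assoc]
    have : m * (m ^ qr)⁻¹ = m ^ (1 - qr) := by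
      rw [Real.rpow_sub hm0, Real.rpow_one, div_eq_mul_inv]
    rw [this]
    nth_rewrite 2 [← mul_one c]
    exact mul_lt_mul_of_pos_left
      (Real.rpow_lt_one_of_one_lt_of_neg (by linarith) (by linarith)) hc0
  have hlt : (c + m * d ^ qr) ^ (1/qr) < (2*c) ^ (1/qr) := by
    apply Real.rpow_lt_rpow (by positivity) (by linarith) (by positivity)
  have e1 := hf π₁ hπ₁mem
  have e2 := hf π₂ hπ₂mem
  rw [hb₁] at e1
  rw [hb₂] at e2
  have : π₁ i0 = π₂ i0 := by rw [hπ₁, hπ₂]; dsimp only; rw [if_pos rfl, if_pos rfl]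
  rw [this] at e1
  rw [← e2] at e1
  linarith

/-- dual-norm rewrite of worst-case regret under ℓ_p-bounded
perturbations, and coordinate-locality of the vertex bonus factor
b_{p,i}(π) = ‖eᵢ − π‖_q if and only if p ∈ {1, ∞}, with the endpoint formulas
b_{1,i}(π) = 1 − πᵢ and b_{∞,i}(π) = 2(1 − πᵢ). -/
theorem stmt10 (n : ℕ) (hn : 3 ≤ n) (p q : ℝ≥0∞) (hpq : ENNReal.HolderConjugate p q)
    (δ : ℝ) (hδ : 0 ≤ δ) :
    (∀ (r : Fin n → ℝ), ∀ π ∈ stdSimplex ℝ (Fin n),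
      IsGreatest
        {v : ℝ | ∃ Δ : Fin n → ℝ, lpNorm p Δ ≤ δ ∧
          ∃ β ∈ stdSimplex ℝ (Fin n), v = ∑ i, (β i - π i) * (r i + Δ i)}
        (⨆ i : Fin n, (r i - (∑ j, π j * r j)
          + δ * lpNorm q (fun j => (if j = i then (1:ℝ) else 0) - π j)))) ∧
    ((∀ i : Fin n, ∃ f : ℝ → ℝ, ∀ π ∈ stdSimplex ℝ (Fin n),
        lpNorm q (fun j => (if j = i then (1:ℝ) else 0) - π j) = f (π i))
      ↔ (p = 1 ∨ p = ∞)) ∧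
    (∀ π ∈ stdSimplex ℝ (Fin n), ∀ i : Fin n,
      lpNorm ∞ (fun j => (if j = i then (1:ℝ) else 0) - π j) = 1 - π i ∧
      lpNorm 1 (fun j => (if j = i then (1:ℝ) else 0) - π j) = 2 * (1 - π i)) := by
  refine ⟨fun r π hπ => part1 hn hpq hδ r hπ, ?_, fun π hπ i => ⟨bonus_top hπ i, bonus_one hπ i⟩⟩
  constructor
  · intro H
    rcases conj_cases hpq with ⟨hp1, _⟩ | ⟨hpt, _⟩ | ⟨hpt, hqt, hr⟩
    · exact Or.inl hp1
    · exact Or.inr hpt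
    · exact absurd (H ⟨0, by omega⟩) (fun h => part2_core hn hqt hr.symm.lt _ h)
  · rintro (rfl | rfl)
    · have hq : q = ∞ := by
        rcases conj_cases hpq with ⟨_, hq⟩ | ⟨hp, _⟩ | ⟨_, _, hr⟩
        · exact hq
        · exact absurd hp (by simp)
        · exfalso; have := hr.lt; rw [ENNReal.toReal_one] at this; linarith
      subst hq
      exact fun i => ⟨fun x => 1 - x, fun π hπ => bonus_top hπ i⟩
    · have hq : q = 1 := by
        rcases conj_cases hpq with ⟨hp, _⟩ | ⟨_, hq⟩ | ⟨hpt, _, _⟩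
        · exact absurd hp.symm (by simp)
        · exact hq
        · exact absurd rfl hpt
      subst hq
      exact fun i => ⟨fun x => 2 * (1 - x), fun π hπ => bonus_one hπ i⟩
end

section
/- For any π ∈ Δ_n, r̂ ∈ ℝⁿ, and δ ≥ 0, the worst-case regret under ℓ_∞-bounded reward perturbations equals the ℓ₁-case with doubled budget: max_{‖Δ‖_∞ ≤ δ} max_{β ∈ Δ_n} ⟨β − π, r̂ + Δ⟩ = 2δ + max_i {r̂ᵢ − 2δπᵢ} − ⟨π, r̂⟩. -/
open scoped BigOperators

/-- worst-case regret under ℓ_∞-bounded reward perturbations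
equals the ℓ₁ closed form with doubled budget. -/
theorem stmt12 (n : ℕ) [NeZero n] (π : Fin n → ℝ) (hπ : π ∈ stdSimplex ℝ (Fin n))
    (r : Fin n → ℝ) (δ : ℝ) (hδ : 0 ≤ δ) :
    IsGreatest
      {v : ℝ | ∃ Δ : Fin n → ℝ, (⨆ i, |Δ i|) ≤ δ ∧
        ∃ β ∈ stdSimplex ℝ (Fin n), v = ∑ i, (β i - π i) * (r i + Δ i)}
      (2 * δ + (⨆ i, (r i - 2 * δ * π i)) - ∑ i, π i * r i) := by
  obtain ⟨hπ0, hπ1⟩ := hπ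
  have hπle : ∀ i, π i ≤ 1 := by
    intro i
    calc π i ≤ ∑ j, π j := Finset.single_le_sum (fun j _ => hπ0 j) (Finset.mem_univ i)
      _ = 1 := hπ1
  obtain ⟨i0, hi0⟩ := Finite.exists_max (fun i : Fin n => r i - 2 * δ * π i)
  have hsup : (⨆ i, (r i - 2 * δ * π i)) = r i0 - 2 * δ * π i0 := by
    apply le_antisymm
    · exact ciSup_le hi0
    · exact le_ciSup (f := fun i => r i - 2 * δ * π i) (Set.Finite.bddAbove (Set.finite_range _)) i0
  constructor
  · -- membership
    set β : Fin n → ℝ := fun i => if i = i0 then 1 else 0 with hβdef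
    set Δ : Fin n → ℝ := fun i => 2 * δ * β i - δ with hΔdef
    refine ⟨Δ, ?_, β, ⟨?_, ?_⟩, ?_⟩
    · apply ciSup_le
      intro i
      simp only [hΔdef, hβdef]
      by_cases h : i = i0 <;> simp [h, abs_le] <;> first | (constructor <;> linarith) | linarith
    · intro i
      simp only [hβdef]
      by_cases h : i = i0 <;> simp [h]
    · simp [hβdef, Finset.sum_ite_eq']
    · have h1 : ∑ i, β i * (r i + Δ i) = r i0 + δ := by
        rw [Finset.sum_eq_single i0]
        · simp [hβdef, hΔdef]; ring
        · intro b _ hb; simp [hβdef, hb]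
        · intro h; exact absurd (Finset.mem_univ i0) h
      have h2 : ∑ i, π i * β i = π i0 := by
        rw [Finset.sum_eq_single i0]
        · simp [hβdef]
        · intro b _ hb; simp [hβdef, hb]
        · intro h; exact absurd (Finset.mem_univ i0) h
      have h3 : ∑ i, π i * Δ i = 2 * δ * π i0 - δ := by
        have : ∀ i, π i * Δ i = 2 * δ * (π i * β i) - δ * π i := by
          intro i; simp only [hΔdef]; ring
        rw [Finset.sum_congr rfl (fun i _ => this i), Finset.sum_sub_distrib,
          ← Finset.mul_sum, ← Finset.mul_sum, h2, hπ1]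
        ring
      have : ∑ i, (β i - π i) * (r i + Δ i)
          = ∑ i, β i * (r i + Δ i) - ∑ i, π i * r i - ∑ i, π i * Δ i := by
        rw [← Finset.sum_sub_distrib, ← Finset.sum_sub_distrib]
        apply Finset.sum_congr rfl
        intro i _; ring
      rw [this, h1, h3, hsup]
      ring
  · -- upper bound
    rintro v ⟨Δ, hΔ, β, ⟨hβ0, hβ1⟩, rfl⟩
    have hβle : ∀ i, β i ≤ 1 := by
      intro i
      calc β i ≤ ∑ j, β j := Finset.single_le_sum (fun j _ => hβ0 j) (Finset.mem_univ i)
        _ = 1 := hβ1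
    have habs : ∀ i, |Δ i| ≤ δ := fun i =>
      le_trans (le_ciSup (f := fun i => |Δ i|) (Set.Finite.bddAbove (Set.finite_range _)) i) hΔ
    have key : ∀ i, (β i - π i) * (r i + Δ i)
        ≤ β i * (r i - 2 * δ * π i) - π i * r i + δ * (β i + π i) := by
      intro i
      obtain ⟨hl, hr⟩ := abs_le.mp (habs i)
      rcases le_total (β i) (π i) with h | h
      · nlinarith [hβ0 i, hπ0 i, hβle i, hπle i, mul_nonneg (hβ0 i) (sub_nonneg.mpr (hπle i)),
          mul_le_mul_of_nonneg_left hl (sub_nonneg.mpr h)]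
      · nlinarith [hβ0 i, hπ0 i, hβle i, hπle i, mul_nonneg (hπ0 i) (sub_nonneg.mpr (hβle i)),
          mul_le_mul_of_nonneg_left hr (sub_nonneg.mpr h)]
    have hsum : ∑ i, (β i - π i) * (r i + Δ i)
        ≤ ∑ i, (β i * (r i - 2 * δ * π i) - π i * r i + δ * (β i + π i)) :=
      Finset.sum_le_sum (fun i _ => key i)
    have hsum2 : ∑ i, β i * (r i - 2 * δ * π i) ≤ r i0 - 2 * δ * π i0 := by
      calc ∑ i, β i * (r i - 2 * δ * π i) ≤ ∑ i, β i * (r i0 - 2 * δ * π i0) :=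
            Finset.sum_le_sum (fun i _ => mul_le_mul_of_nonneg_left (hi0 i) (hβ0 i))
        _ = (∑ i, β i) * (r i0 - 2 * δ * π i0) := by rw [← Finset.sum_mul]
        _ = r i0 - 2 * δ * π i0 := by rw [hβ1]; ring
    have hexpand : ∑ i, (β i * (r i - 2 * δ * π i) - π i * r i + δ * (β i + π i))
        = ∑ i, β i * (r i - 2 * δ * π i) - ∑ i, π i * r i + δ * ((∑ i, β i) + ∑ i, π i) := by
      rw [Finset.sum_add_distrib, Finset.sum_sub_distrib, ← Finset.mul_sum,
        Finset.sum_add_distrib]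
    rw [hsup]
    calc ∑ i, (β i - π i) * (r i + Δ i)
        ≤ ∑ i, β i * (r i - 2 * δ * π i) - ∑ i, π i * r i + δ * ((∑ i, β i) + ∑ i, π i) := by
          rw [← hexpand]; exact hsum
      _ ≤ (r i0 - 2 * δ * π i0) - ∑ i, π i * r i + δ * 2 := by
          rw [hβ1, hπ1]; linarith
      _ = 2 * δ + (r i0 - 2 * δ * π i0) - ∑ i, π i * r i := by ring
end

section
/- Assume r̂₁ > r̂₂ > ⋯ > r̂ₙ, let φ : ℝ → ℝ be increasing, and set tᵢ = φ(r̂ᵢ). Let π^{DRRO}(δ) maximize ⟨π, r̂⟩ − max_i (r̂ᵢ − δπᵢ) over Δ_n and let π^{DRO}(δ) maximize ⟨π, r̂⟩ − δ‖π‖_∞ over Δ_n (with the explicit top-k-uniform optimizer). Then ∑ᵢ πᵢ^{DRRO}(δ) tᵢ ≥ ∑ᵢ πᵢ^{DRO}(δ) tᵢ; the inequality is strict if φ is strictly increasing and the two optimizers differ. -/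
open scoped BigOperators

section Stmt16AuxSection
open Finset

namespace Stmt16Aux

variable {n : ℕ}

/-- lift a `Fin n` vector to `ℕ`, zero outside. -/
def up (n : ℕ) (v : Fin n → ℝ) : ℕ → ℝ := fun i => if h : i < n then v ⟨i, h⟩ else 0

lemma up_fin (v : Fin n → ℝ) (i : Fin n) : up n v (i : ℕ) = v i := by
  simp [up, i.isLt]

lemma up_lt (v : Fin n → ℝ) {i : ℕ} (h : i < n) : up n v i = v ⟨i, h⟩ := dif_pos h

lemma sum_univ_up (v : Fin n → ℝ) : ∑ i, v i = ∑ i ∈ range n, up n v i := by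
  rw [← Fin.sum_univ_eq_sum_range (up n v) n]
  exact Finset.sum_congr rfl fun i _ => (up_fin v i).symm

lemma sum_mul_up (v w : Fin n → ℝ) :
    ∑ i, v i * w i = ∑ i ∈ range n, up n v i * up n w i := by
  rw [← Fin.sum_univ_eq_sum_range (fun i => up n v i * up n w i) n]
  exact Finset.sum_congr rfl fun i _ => by rw [up_fin, up_fin]

lemma sum_filter_lt_up (v : Fin n → ℝ) {j : ℕ} (hj : j ≤ n) :
    ∑ i ∈ Finset.univ.filter (fun i : Fin n => (i : ℕ) < j), v i
      = ∑ i ∈ range j, up n v i := by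
  have h1 : ∑ i ∈ Finset.univ.filter (fun i : Fin n => (i : ℕ) < j), v i
      = ∑ i : Fin n, (if (i : ℕ) < j then up n v i else 0) := by
    rw [Finset.sum_filter]
    exact Finset.sum_congr rfl fun i _ => by rw [up_fin]
  rw [h1, Fin.sum_univ_eq_sum_range (fun i => if i < j then up n v i else 0) n,
    ← Finset.sum_filter]
  congr 1
  ext x
  simp only [mem_filter, mem_range]
  omega

lemma sum_filter_le_up (v : Fin n → ℝ) (j : Fin n) :
    ∑ i ∈ Finset.univ.filter (fun i => i ≤ j), v i
      = ∑ i ∈ range ((j : ℕ) + 1), up n v i := by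
  rw [← sum_filter_lt_up v (Nat.succ_le_of_lt j.isLt)]
  congr 1
  ext x
  simp only [Finset.mem_filter, Finset.mem_univ, true_and, Fin.le_def, Nat.lt_succ_iff]

lemma fin_sup_le [NeZero n] {v : Fin n → ℝ} {c : ℝ} (h : ∀ i, v i ≤ c) :
    (⨆ i, v i) ≤ c := ciSup_le h

lemma le_fin_sup (v : Fin n → ℝ) (i : Fin n) : v i ≤ ⨆ j, v j :=
  le_ciSup (Set.Finite.bddAbove (Set.finite_range v)) i

lemma exists_sup_eq [NeZero n] (v : Fin n → ℝ) :
    ∃ i, (⨆ j, v j) = v i ∧ ∀ j, v j ≤ v i := by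
  obtain ⟨i, hi⟩ := Finite.exists_max v
  exact ⟨i, le_antisymm (ciSup_le hi) (le_fin_sup v i), hi⟩

lemma sum_split (i j : Fin n) (hij : i ≠ j) (f : Fin n → ℝ) :
    ∑ x, f x = f i + f j + ∑ x ∈ (Finset.univ.erase i).erase j, f x := by
  have hj : j ∈ Finset.univ.erase i := by
    simp [Finset.mem_erase, hij.symm]
  have h1 := Finset.sum_erase_add (Finset.univ.erase i) f hj
  have h2 := Finset.sum_erase_add (Finset.univ : Finset (Fin n)) f (Finset.mem_univ i)
  linarith

/-- Abel summation identity. -/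
lemma abel_identity (x tt : ℕ → ℝ) :
    ∀ N : ℕ,
    ∑ i ∈ range (N + 1), x i * tt i
      = (∑ i ∈ range (N + 1), x i) * tt N
        + ∑ j ∈ range N, (∑ i ∈ range (j + 1), x i) * (tt j - tt (j + 1)) := by
  intro N
  induction N with
  | zero => simp
  | succ N ih =>
    rw [Finset.sum_range_succ (fun i => x i * tt i), ih,
      Finset.sum_range_succ (fun j => (∑ i ∈ range (j + 1), x i) * (tt j - tt (j + 1))),
      Finset.sum_range_succ x (N + 1)]
    ring

lemma dominance_weak (x tt : ℕ → ℝ) (N : ℕ)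
    (hmono : ∀ j, j + 1 < N → tt (j + 1) ≤ tt j)
    (hX : ∀ j, j ≤ N → 0 ≤ ∑ i ∈ range j, x i)
    (hXN : ∑ i ∈ range N, x i = 0) :
    0 ≤ ∑ i ∈ range N, x i * tt i := by
  rcases N with _ | M
  · simp
  rw [abel_identity x tt M, hXN, zero_mul, zero_add]
  refine Finset.sum_nonneg fun j hj => ?_
  rw [Finset.mem_range] at hj
  exact mul_nonneg (hX (j + 1) (by omega)) (by linarith [hmono j (by omega)])

lemma dominance_strict (x tt : ℕ → ℝ) (N : ℕ)
    (hmono : ∀ j, j + 1 < N → tt (j + 1) < tt j)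
    (hX : ∀ j, j ≤ N → 0 ≤ ∑ i ∈ range j, x i)
    (hXN : ∑ i ∈ range N, x i = 0)
    (j0 : ℕ) (hj00 : 0 < j0) (hj0N : j0 < N) (hj0 : 0 < ∑ i ∈ range j0, x i) :
    0 < ∑ i ∈ range N, x i * tt i := by
  rcases N with _ | M
  · omega
  rw [abel_identity x tt M, hXN, zero_mul, zero_add]
  refine Finset.sum_pos' (fun j hj => ?_) ⟨j0 - 1, ?_, ?_⟩
  · rw [Finset.mem_range] at hj
    exact mul_nonneg (hX (j + 1) (by omega)) (by linarith [hmono j (by omega)])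
  · rw [Finset.mem_range]; omega
  · have h1 : j0 - 1 + 1 = j0 := by omega
    rw [h1]
    have h2 := hmono (j0 - 1) (by omega)
    rw [h1] at h2
    exact mul_pos hj0 (by linarith)

lemma mem_iff_lt_card (S : Finset (Fin n))
    (hdc : ∀ i j : Fin n, i ≤ j → j ∈ S → i ∈ S) (i : Fin n) :
    i ∈ S ↔ (i : ℕ) < S.card := by
  constructor
  · intro hi
    have hsub : Finset.Iic i ⊆ S := fun j hj => hdc j i (Finset.mem_Iic.mp hj) hi
    have := Finset.card_le_card hsub
    rw [Fin.card_Iic] at this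
    omega
  · intro hi
    by_contra hmem
    have hsub : S ⊆ Finset.Iio i := by
      intro j hj
      rw [Finset.mem_Iio]
      by_contra hji
      exact hmem (hdc i j (le_of_not_gt hji) hj)
    have := Finset.card_le_card hsub
    rw [Fin.card_Iio] at this
    omega

lemma le_of_step (f : ℕ → ℝ) (K : ℕ)
    (hstep : ∀ j, 1 ≤ j → j + 1 ≤ K → f j ≤ f (j + 1)) :
    ∀ j, 1 ≤ j → j ≤ K → f j ≤ f K := by
  induction K with
  | zero => intro j h1 h2; omega
  | succ K ih =>
    intro j h1 h2
    rcases Nat.eq_or_lt_of_le h2 with h | h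
    · rw [h]
    · have hjK : j ≤ K := by omega
      have h3 : f j ≤ f K := ih (fun j hj1 hj2 => hstep j hj1 (by omega)) j h1 hjK
      exact le_trans h3 (hstep K (by omega) le_rfl)

lemma lt_of_step (f : ℕ → ℝ) (K : ℕ)
    (hstep : ∀ j, 1 ≤ j → j + 1 ≤ K → f j < f (j + 1)) :
    ∀ j, 1 ≤ j → j < K → f j < f K := by
  induction K with
  | zero => intro j h1 h2; omega
  | succ K ih =>
    intro j h1 h2
    have hlast : f K ≤ f (K + 1) := le_of_lt (hstep K (by omega) le_rfl)
    rcases Nat.eq_or_lt_of_le (Nat.lt_succ_iff.mp h2) with h | h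
    · rw [h]; exact hstep K (by omega) le_rfl
    · exact lt_of_lt_of_le (ih (fun j hj1 hj2 => hstep j hj1 (by omega)) j h1 h) hlast

set_option maxHeartbeats 2000000 in
theorem stmt16' (n : ℕ) [NeZero n] (r : Fin n → ℝ) (hr : StrictAnti r)
    (δ : ℝ) (hδ : 0 < δ)
    (φ : ℝ → ℝ) (hφ : Monotone φ)
    (t : Fin n → ℝ) (ht : t = fun i => φ (r i))
    (πDRRO : Fin n → ℝ) (hDRRO_mem : πDRRO ∈ stdSimplex ℝ (Fin n))
    (hDRRO_opt : ∀ π ∈ stdSimplex ℝ (Fin n),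
      (∑ i, π i * r i) - (⨆ i, (r i - δ * π i))
        ≤ (∑ i, πDRRO i * r i) - (⨆ i, (r i - δ * πDRRO i)))
    (πDRO : Fin n → ℝ)
    (hDRO_opt : ∀ π ∈ stdSimplex ℝ (Fin n),
      (∑ i, π i * r i) - δ * (⨆ i, π i)
        ≤ (∑ i, πDRO i * r i) - δ * (⨆ i, πDRO i))
    (m : Fin n)
    (hm : ∀ k : Fin n,
      (∑ i ∈ Finset.univ.filter (fun i => i ≤ k), r i) / ((k : ℝ) + 1)
          - δ / ((k : ℝ) + 1)
        ≤ (∑ i ∈ Finset.univ.filter (fun i => i ≤ m), r i) / ((m : ℝ) + 1)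
          - δ / ((m : ℝ) + 1))
    (hDRO_eq : πDRO = fun i => if i ≤ m then 1 / ((m : ℝ) + 1) else 0) :
    (∑ i, πDRO i * t i) ≤ (∑ i, πDRRO i * t i) ∧
    (StrictMono φ → πDRRO ≠ πDRO →
      (∑ i, πDRO i * t i) < (∑ i, πDRRO i * t i)) := by
  classical
  have hn : 0 < n := Nat.pos_of_ne_zero (NeZero.ne n)
  have hπ0 : ∀ i, 0 ≤ πDRRO i := hDRRO_mem.1
  have hπ1 : ∑ i, πDRRO i = 1 := hDRRO_mem.2
  set tstar : ℝ := ⨆ i, (r i - δ * πDRRO i) with htstar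
  have hub : ∀ i, r i - δ * πDRRO i ≤ tstar := fun i => le_fin_sup (fun j => r j - δ * πDRRO j) i
  -- (F1) monotonicity
  have hmono : ∀ i j : Fin n, i ≤ j → πDRRO j ≤ πDRRO i := by
    intro i j hij
    by_contra hlt
    push_neg at hlt
    have hijne : i ≠ j := by rintro rfl; exact lt_irrefl _ hlt
    have hijlt : i < j := lt_of_le_of_ne hij hijne
    have hrij : r j < r i := hr hijlt
    set π' : Fin n → ℝ := πDRRO ∘ (Equiv.swap i j) with hπ'
    have hπ'i : π' i = πDRRO j := by simp [hπ', Equiv.swap_apply_left]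
    have hπ'j : π' j = πDRRO i := by simp [hπ', Equiv.swap_apply_right]
    have hπ'other : ∀ x : Fin n, x ≠ i → x ≠ j → π' x = πDRRO x := by
      intro x hxi hxj
      simp [hπ', Equiv.swap_apply_of_ne_of_ne hxi hxj]
    have hmem : π' ∈ stdSimplex ℝ (Fin n) := by
      refine ⟨fun x => hπ0 _, ?_⟩
      rw [hπ']
      exact (Equiv.sum_comp (Equiv.swap i j) πDRRO).trans hπ1
    have e1 := sum_split i j hijne (fun x => π' x * r x)
    have e2 := sum_split i j hijne (fun x => πDRRO x * r x)
    have e3 : ∑ x ∈ (Finset.univ.erase i).erase j, π' x * r x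
        = ∑ x ∈ (Finset.univ.erase i).erase j, πDRRO x * r x := by
      refine Finset.sum_congr rfl fun x hx => ?_
      rw [Finset.mem_erase, Finset.mem_erase] at hx
      rw [hπ'other x hx.2.1 hx.1]
    simp only [hπ'i, hπ'j] at e1
    have hsum : ∑ x, π' x * r x
        = (∑ x, πDRRO x * r x) + (πDRRO j - πDRRO i) * (r i - r j) := by
      rw [e1, e2, e3]; ring
    have hsup : (⨆ x, (r x - δ * π' x)) ≤ tstar := by
      apply fin_sup_le
      intro x
      by_cases hxi : x = i
      · subst hxi
        rw [hπ'i]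
        have h1 := hub x
        nlinarith
      · by_cases hxj : x = j
        · subst hxj
          rw [hπ'j]
          have h1 := hub i
          nlinarith [hπ0 i]
        · rw [hπ'other x hxi hxj]; exact hub x
    have hopt := hDRRO_opt π' hmem
    have hgain : 0 < (πDRRO j - πDRRO i) * (r i - r j) :=
      mul_pos (by linarith) (by linarith)
    linarith
  -- (F2) positive coordinates have reward at least tstar
  have hF2 : ∀ j : Fin n, 0 < πDRRO j → tstar ≤ r j := by
    intro j hj
    by_contra hlt
    push_neg at hlt
    obtain ⟨i0, hi0eq, hi0max⟩ := exists_sup_eq (fun i => r i - δ * πDRRO i)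
    have htseq : tstar = r i0 - δ * πDRRO i0 := by rw [htstar]; exact hi0eq
    have hri0 : tstar ≤ r i0 := by nlinarith [hπ0 i0]
    have hne2 : i0 ≠ j := by rintro rfl; linarith
    set π' : Fin n → ℝ :=
      Function.update (Function.update πDRRO j 0) i0 (πDRRO i0 + πDRRO j) with hπ'
    have hπ'i0 : π' i0 = πDRRO i0 + πDRRO j := by simp [hπ']
    have hπ'j : π' j = 0 := by
      rw [hπ', Function.update_of_ne hne2.symm, Function.update_self]
    have hπ'other : ∀ x, x ≠ i0 → x ≠ j → π' x = πDRRO x := by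
      intro x h1 h2
      rw [hπ', Function.update_of_ne h1, Function.update_of_ne h2]
    have hmem : π' ∈ stdSimplex ℝ (Fin n) := by
      constructor
      · intro x
        by_cases h1 : x = i0
        · subst h1; rw [hπ'i0]; exact add_nonneg (hπ0 x) (hπ0 j)
        · by_cases h2 : x = j
          · subst h2; rw [hπ'j]
          · rw [hπ'other x h1 h2]; exact hπ0 x
      · have e1 := sum_split i0 j hne2 π'
        have e2 := sum_split i0 j hne2 πDRRO
        have e3 : ∑ x ∈ (Finset.univ.erase i0).erase j, π' x
            = ∑ x ∈ (Finset.univ.erase i0).erase j, πDRRO x := by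
          refine Finset.sum_congr rfl fun x hx => ?_
          rw [Finset.mem_erase, Finset.mem_erase] at hx
          exact hπ'other x hx.2.1 hx.1
        rw [hπ'i0, hπ'j] at e1
        rw [hπ1] at e2
        rw [e1, e3]
        linarith
    have e1 := sum_split i0 j hne2 (fun x => π' x * r x)
    have e2 := sum_split i0 j hne2 (fun x => πDRRO x * r x)
    have e3 : ∑ x ∈ (Finset.univ.erase i0).erase j, π' x * r x
        = ∑ x ∈ (Finset.univ.erase i0).erase j, πDRRO x * r x := by
      refine Finset.sum_congr rfl fun x hx => ?_
      rw [Finset.mem_erase, Finset.mem_erase] at hx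
      rw [hπ'other x hx.2.1 hx.1]
    simp only [hπ'i0, hπ'j] at e1
    have hsum : ∑ x, π' x * r x
        = (∑ x, πDRRO x * r x) + πDRRO j * (r i0 - r j) := by
      rw [e1, e2, e3]; ring
    have hsup : (⨆ x, (r x - δ * π' x)) ≤ tstar := by
      apply fin_sup_le
      intro x
      by_cases h1 : x = i0
      · subst h1
        rw [hπ'i0]
        have h2 := hub x
        nlinarith [hπ0 j]
      · by_cases h2 : x = j
        · subst h2
          rw [hπ'j]
          linarith
        · rw [hπ'other x h1 h2]; exact hub x
    have hopt := hDRRO_opt π' hmem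
    have hgain : 0 < πDRRO j * (r i0 - r j) := mul_pos hj (by linarith)
    linarith
  -- support
  set S : Finset (Fin n) := Finset.univ.filter (fun i => 0 < πDRRO i) with hS
  set k : ℕ := S.card with hkdef
  have hsupp : ∀ i : Fin n, 0 < πDRRO i ↔ (i : ℕ) < k := by
    intro i
    rw [show (0 < πDRRO i ↔ i ∈ S) by simp [hS]]
    exact mem_iff_lt_card S (fun i j hij hjS => by
      simp only [hS, Finset.mem_filter, Finset.mem_univ, true_and] at *
      exact lt_of_lt_of_le hjS (hmono i j hij)) i
  have hkn : k ≤ n := le_trans (Finset.card_le_univ S) (by simp)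
  have hk1 : 1 ≤ k := by
    by_contra h
    push_neg at h
    have hzero : ∀ i, πDRRO i = 0 := by
      intro i
      have h2 : ¬ (0 < πDRRO i) := by rw [hsupp i]; omega
      linarith [hπ0 i]
    rw [Finset.sum_eq_zero (fun i _ => hzero i)] at hπ1
    norm_num at hπ1
  have hkF : k - 1 < n := by omega
  set kF : Fin n := ⟨k - 1, hkF⟩ with hkFdef
  have hkF_pos : 0 < πDRRO kF := (hsupp kF).mpr (by simp [hkFdef]; omega)
  have htkF : tstar ≤ r kF := hF2 kF hkF_pos
  -- ℕ world
  set a : ℕ → ℝ := up n r with ha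
  set ap : ℕ → ℝ := up n πDRRO with hap
  set aq : ℕ → ℝ := up n πDRO with haq
  set at' : ℕ → ℝ := up n t with hat
  have hadec : ∀ i j : ℕ, i < j → j < n → a j < a i := by
    intro i j hij hjn
    rw [ha, up_lt r hjn, up_lt r (lt_trans hij hjn)]
    exact hr (by simp [Fin.lt_def]; omega)
  have hapnn : ∀ i, 0 ≤ ap i := by
    intro i; rw [hap, up]
    split
    · exact hπ0 _
    · exact le_refl 0
  have hap0 : ∀ i, k ≤ i → ap i = 0 := by
    intro i hi; rw [hap, up]
    split
    · next h =>
      have := hsupp ⟨i, h⟩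
      simp only [Fin.val_mk] at this
      have h2 : ¬ (0 < πDRRO ⟨i, h⟩) := by rw [this]; omega
      linarith [hπ0 ⟨i, h⟩]
    · rfl
  -- prefix sums (stated directly)
  have hPn : ∑ i ∈ range n, ap i = 1 := by rw [hap, ← sum_univ_up]; exact hπ1
  have hPk : ∀ j, k ≤ j → j ≤ n → ∑ i ∈ range j, ap i = 1 := by
    intro j hkj hjn
    have h1 : ∑ i ∈ range n, ap i = ∑ i ∈ range j, ap i + ∑ i ∈ Finset.Ico j n, ap i :=
      (Finset.sum_range_add_sum_Ico ap hjn).symm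
    have h2 : ∑ i ∈ Finset.Ico j n, ap i = 0 :=
      Finset.sum_eq_zero fun i hi => hap0 i (le_trans hkj (Finset.mem_Ico.mp hi).1)
    rw [hPn] at h1; linarith
  -- key strict inequality  (F3)
  have hakF : a (k - 1) = r kF := by
    rw [ha, up_lt r hkF, hkFdef]
  have hapkF : ap (k - 1) = πDRRO kF := by
    rw [hap, up_lt πDRRO hkF, hkFdef]
  have hkey : ∑ i ∈ range k, (a i - a (k - 1)) < δ := by
    have hsum1 : ∑ i ∈ range k, ap i = 1 := hPk k le_rfl hkn
    have hlt2 : ∑ i ∈ range k, (a i - a (k - 1)) < ∑ i ∈ range k, (δ * ap i) := by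
      apply Finset.sum_lt_sum
      · intro i hi
        rw [Finset.mem_range] at hi
        have hin : i < n := lt_of_lt_of_le hi hkn
        have h1 : r ⟨i, hin⟩ - δ * πDRRO ⟨i, hin⟩ ≤ tstar := hub _
        have h2 : a i = r ⟨i, hin⟩ := by rw [ha, up_lt r hin]
        have h3 : ap i = πDRRO ⟨i, hin⟩ := by rw [hap, up_lt πDRRO hin]
        rw [h2, h3, hakF]
        linarith
      · refine ⟨k - 1, by rw [Finset.mem_range]; omega, ?_⟩
        rw [hakF, hapkF]
        have := mul_pos hδ hkF_pos
        linarith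
    have hsum2 : ∑ i ∈ range k, (δ * ap i) = δ := by
      rw [← Finset.mul_sum, hsum1, mul_one]
    linarith
  -- k ≤ m+1
  have hkm : k ≤ (m : ℕ) + 1 := by
    have hstepH : ∀ j, 1 ≤ j → j + 1 ≤ k →
        (fun j => ∑ i ∈ range j, (a i - a (j - 1))) j
          ≤ (fun j => ∑ i ∈ range j, (a i - a (j - 1))) (j + 1) := by
      intro j h1 h2
      simp only [Nat.add_sub_cancel]
      have hjn : j < n := by omega
      have e1 : ∑ i ∈ range j, (a i - a (j - 1))
          = (∑ i ∈ range j, a i) - (j : ℝ) * a (j - 1) := by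
        rw [Finset.sum_sub_distrib, Finset.sum_const, Finset.card_range, nsmul_eq_mul]
      have e2 : ∑ i ∈ range (j + 1), (a i - a j)
          = ((∑ i ∈ range j, a i) + a j) - ((j : ℝ) + 1) * a j := by
        rw [Finset.sum_sub_distrib, Finset.sum_const, Finset.card_range, nsmul_eq_mul,
          Finset.sum_range_succ]
        push_cast
        ring
      have hmono_a : a j ≤ a (j - 1) := le_of_lt (hadec (j - 1) j (by omega) hjn)
      rw [e1, e2]
      nlinarith [mul_le_mul_of_nonneg_left hmono_a (show (0:ℝ) ≤ (j:ℝ) by positivity)]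
    have hH : ∀ j, 1 ≤ j → j ≤ k → ∑ i ∈ range j, (a i - a (j - 1)) < δ := by
      intro j h1 h2
      have h3 := le_of_step (fun j => ∑ i ∈ range j, (a i - a (j - 1))) k hstepH j h1 h2
      calc ∑ i ∈ range j, (a i - a (j - 1)) ≤ ∑ i ∈ range k, (a i - a (k - 1)) := h3
        _ < δ := hkey
    set g : ℕ → ℝ := fun j => ((∑ i ∈ range j, a i) - δ) / (j : ℝ) with hg
    have hgval : ∀ j, g j = ((∑ i ∈ range j, a i) - δ) / (j : ℝ) := fun j => rfl
    have hgstep : ∀ j, 1 ≤ j → j + 1 ≤ k → g j < g (j + 1) := by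
      intro j h1 h2
      have hHj := hH (j + 1) (by omega) h2
      have e2 : ∑ i ∈ range (j + 1), (a i - a (j + 1 - 1))
          = ((∑ i ∈ range j, a i) + a j) - ((j : ℝ) + 1) * a j := by
        simp only [Nat.add_sub_cancel]
        rw [Finset.sum_sub_distrib, Finset.sum_const, Finset.card_range, nsmul_eq_mul,
          Finset.sum_range_succ]
        push_cast
        ring
      rw [e2] at hHj
      rw [hgval, hgval]
      have hj0 : (0:ℝ) < (j:ℝ) := by exact_mod_cast Nat.pos_of_ne_zero (by omega)
      have hj10 : (0:ℝ) < ((j:ℕ):ℝ) + 1 := by positivity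
      have hcast : (((j+1:ℕ)):ℝ) = (j:ℝ) + 1 := by push_cast; ring
      rw [hcast, div_lt_div_iff₀ hj0 hj10, Finset.sum_range_succ a j]
      nlinarith [hHj]
    have hchain := lt_of_step g k hgstep
    by_contra hc
    push_neg at hc
    have hflt : g ((m:ℕ) + 1) < g k := hchain ((m:ℕ) + 1) (by omega) hc
    have hmk := hm ⟨k - 1, hkF⟩
    have efil1 : ∑ i ∈ Finset.univ.filter (fun i => i ≤ (⟨k - 1, hkF⟩ : Fin n)), r i
        = ∑ i ∈ range k, a i := by
      rw [sum_filter_le_up r ⟨k - 1, hkF⟩, ← ha]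
      norm_num
      rw [show k - 1 + 1 = k from by omega]
    have efil2 : ∑ i ∈ Finset.univ.filter (fun i => i ≤ m), r i
        = ∑ i ∈ range ((m:ℕ) + 1), a i := by
      rw [sum_filter_le_up r m, ← ha]
    rw [efil1, efil2] at hmk
    simp only [Fin.val_mk] at hmk
    have hcast : ((k - 1 : ℕ) : ℝ) + 1 = (k : ℝ) := by
      rw [Nat.cast_sub hk1]
      push_cast
      ring
    rw [hcast] at hmk
    have hgk : g k = (∑ i ∈ range k, a i) / (k:ℝ) - δ / (k:ℝ) := by
      rw [hgval, sub_div]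
    have hgm : g ((m:ℕ) + 1)
        = (∑ i ∈ range ((m:ℕ) + 1), a i) / (((m:ℕ):ℝ) + 1) - δ / (((m:ℕ):ℝ) + 1) := by
      rw [hgval, sub_div]
      push_cast
      ring
    rw [hgk, hgm] at hflt
    linarith
  -- Q facts
  have haqnn : ∀ i, 0 ≤ aq i := by
    intro i; rw [haq, up]
    split
    · rw [hDRO_eq]
      dsimp only
      split
      · positivity
      · exact le_refl 0
    · exact le_refl 0
  have hmpos : (0:ℝ) < ((m:ℕ):ℝ) + 1 := by positivity
  have hQval : ∀ j, j ≤ (m : ℕ) + 1 → ∑ i ∈ range j, aq i = (j : ℝ) / ((m : ℝ) + 1) := by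
    intro j hj
    have hterm : ∀ i ∈ range j, aq i = 1 / ((m : ℝ) + 1) := by
      intro i hi
      rw [Finset.mem_range] at hi
      have hin : i < n := by have := m.isLt; omega
      rw [haq, up_lt πDRO hin, hDRO_eq]
      have : (⟨i, hin⟩ : Fin n) ≤ m := by
        rw [Fin.le_def]
        simp only [Fin.val_mk]
        omega
      simp only [if_pos this]
    rw [Finset.sum_congr rfl hterm, Finset.sum_const, Finset.card_range, nsmul_eq_mul,
      mul_one_div]
  have hQn : ∑ i ∈ range n, aq i = 1 := by
    have hsplit := Finset.sum_range_add_sum_Ico aq (show (m:ℕ) + 1 ≤ n from m.isLt)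
    have hz : ∑ i ∈ Finset.Ico ((m:ℕ) + 1) n, aq i = 0 := by
      refine Finset.sum_eq_zero fun i hi => ?_
      rw [Finset.mem_Ico] at hi
      rw [haq, up_lt πDRO hi.2, hDRO_eq]
      have : ¬ ((⟨i, hi.2⟩ : Fin n) ≤ m) := by
        rw [Fin.le_def]
        simp only [Fin.val_mk]
        omega
      simp only [if_neg this]
    have hfirst := hQval ((m:ℕ) + 1) le_rfl
    rw [hfirst] at hsplit
    rw [← hsplit, hz]
    push_cast
    field_simp
    norm_num
  have hQle1 : ∀ j, j ≤ n → ∑ i ∈ range j, aq i ≤ 1 := by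
    intro j hjn
    rw [← hQn]
    exact Finset.sum_le_sum_of_subset_of_nonneg
      (Finset.range_subset_range.mpr hjn) (fun i _ _ => haqnn i)
  -- prefix dominance
  have hPQ : ∀ j, j ≤ n → ∑ i ∈ range j, aq i ≤ ∑ i ∈ range j, ap i := by
    intro j hjn
    by_cases hjk : k ≤ j
    · rw [hPk j hjk hjn]
      exact hQle1 j hjn
    · push_neg at hjk
      rcases Nat.eq_zero_or_pos j with hj0 | hj0
      · subst hj0; simp
      have hjn' : j < n := by omega
      have hQj : ∑ i ∈ range j, aq i = (j:ℝ) / ((m : ℝ) + 1) := hQval j (by omega)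
      have hapj : ap j = πDRRO ⟨j, hjn'⟩ := by rw [hap, up_lt πDRRO hjn']
      have h1 : (j:ℝ) * ap j ≤ ∑ i ∈ range j, ap i := by
        have : ∀ i ∈ range j, ap j ≤ ap i := by
          intro i hi
          rw [Finset.mem_range] at hi
          have hin : i < n := by omega
          rw [hapj, hap, up_lt πDRRO hin]
          exact hmono ⟨i, hin⟩ ⟨j, hjn'⟩ (by rw [Fin.le_def]; simp; omega)
        calc (j:ℝ) * ap j = ∑ _i ∈ range j, ap j := by
              rw [Finset.sum_const, Finset.card_range, nsmul_eq_mul]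
          _ ≤ ∑ i ∈ range j, ap i := Finset.sum_le_sum this
      have h2 : ∑ i ∈ Finset.Ico j k, ap i ≤ ((k:ℝ) - (j:ℝ)) * ap j := by
        have hub2 : ∀ i ∈ Finset.Ico j k, ap i ≤ ap j := by
          intro i hi
          rw [Finset.mem_Ico] at hi
          have hin : i < n := by omega
          rw [hapj, hap, up_lt πDRRO hin]
          exact hmono ⟨j, hjn'⟩ ⟨i, hin⟩ (by rw [Fin.le_def]; simp; omega)
        calc ∑ i ∈ Finset.Ico j k, ap i ≤ (Finset.Ico j k).card • ap j :=
              Finset.sum_le_card_nsmul _ _ _ hub2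
          _ = ((k:ℝ) - (j:ℝ)) * ap j := by
              rw [Nat.card_Ico, nsmul_eq_mul, Nat.cast_sub (le_of_lt hjk)]
      have h3 : (1:ℝ) = (∑ i ∈ range j, ap i) + ∑ i ∈ Finset.Ico j k, ap i := by
        rw [Finset.sum_range_add_sum_Ico ap (le_of_lt hjk), hPk k le_rfl hkn]
      have hPnn : (0:ℝ) ≤ ∑ i ∈ range j, ap i :=
        Finset.sum_nonneg fun i _ => hapnn i
      have hkmr : (k:ℝ) ≤ ((m:ℕ):ℝ) + 1 := by exact_mod_cast hkm
      have hjr : (0:ℝ) < (j:ℝ) := by exact_mod_cast hj0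
      have hkr : (0:ℝ) < (k:ℝ) := by exact_mod_cast (by omega : 0 < k)
      have hkj0 : (0:ℝ) ≤ (k:ℝ) - (j:ℝ) := by
        have : (j:ℝ) ≤ (k:ℝ) := by exact_mod_cast (le_of_lt hjk)
        linarith
      have hA := mul_le_mul_of_nonneg_left h2 (le_of_lt hjr)
      have hB := mul_le_mul_of_nonneg_left h1 hkj0
      have hC : (j:ℝ) = (j:ℝ) * ((∑ i ∈ range j, ap i) + ∑ i ∈ Finset.Ico j k, ap i) := by
        rw [← h3, mul_one]
      have hkP : (j:ℝ) ≤ (k:ℝ) * ∑ i ∈ range j, ap i := by nlinarith [hA, hB, hC]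
      have hD : (k:ℝ) * (∑ i ∈ range j, ap i) ≤ (((m:ℕ):ℝ) + 1) * ∑ i ∈ range j, ap i :=
        mul_le_mul_of_nonneg_right hkmr hPnn
      rw [hQj, div_le_iff₀ hmpos]
      nlinarith [hkP, hD]
  -- conclude
  have hXN : ∑ i ∈ range n, (ap i - aq i) = 0 := by
    rw [Finset.sum_sub_distrib, hPn, hQn]; ring
  have hX : ∀ j, j ≤ n → 0 ≤ ∑ i ∈ range j, (ap i - aq i) := by
    intro j hj
    rw [Finset.sum_sub_distrib]
    linarith [hPQ j hj]
  have htmono : ∀ j, j + 1 < n → at' (j + 1) ≤ at' j := by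
    intro j hj
    rw [hat, up_lt t hj, up_lt t (by omega)]
    rw [ht]
    exact hφ (le_of_lt (hr (by simp [Fin.lt_def])))
  have hgoal_eq : (∑ i, πDRRO i * t i) - (∑ i, πDRO i * t i)
      = ∑ i ∈ range n, (ap i - aq i) * at' i := by
    rw [hap, haq, hat, sum_mul_up πDRRO t, sum_mul_up πDRO t, ← Finset.sum_sub_distrib]
    exact Finset.sum_congr rfl fun i _ => by ring
  constructor
  · have h := dominance_weak (fun i => ap i - aq i) at' n htmono hX hXN
    rw [← hgoal_eq] at h
    linarith
  · intro hφs hne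
    have htstrict : ∀ j, j + 1 < n → at' (j + 1) < at' j := by
      intro j hj
      rw [hat, up_lt t hj, up_lt t (by omega)]
      rw [ht]
      exact hφs (hr (by simp [Fin.lt_def]))
    have hex : ∃ j0, 0 < j0 ∧ j0 < n ∧ 0 < ∑ i ∈ range j0, (ap i - aq i) := by
      by_contra hno
      push_neg at hno
      have hD0 : ∀ j, j ≤ n → ∑ i ∈ range j, (ap i - aq i) = 0 := by
        intro j hj
        rcases Nat.eq_zero_or_pos j with h0 | h0
        · subst h0; simp
        rcases Nat.eq_or_lt_of_le hj with he | hlt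
        · rw [he]; exact hXN
        · exact le_antisymm (hno j h0 hlt) (hX j hj)
      apply hne
      funext i
      have hi1 : (i:ℕ) + 1 ≤ n := i.isLt
      have e1 := hD0 ((i:ℕ) + 1) hi1
      have e2 := hD0 (i:ℕ) (by omega)
      rw [Finset.sum_range_succ] at e1
      have e3 : ap (i:ℕ) = aq (i:ℕ) := by rw [e2] at e1; linarith
      rw [hap, haq, up_fin, up_fin] at e3
      exact e3
    obtain ⟨j0, hj00, hj0n, hj0⟩ := hex
    have h := dominance_strict (fun i => ap i - aq i) at' n htstrict hX hXN j0 hj00 hj0n hj0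
    rw [← hgoal_eq] at h
    linarith

end Stmt16Aux
end Stmt16AuxSection


/-- under a rank-preserving true reward, the DRRO optimizer weakly
dominates the explicit top-k-uniform DRO optimizer, strictly when φ is strictly
increasing and the optimizers differ. -/
theorem stmt16 (n : ℕ) [NeZero n] (r : Fin n → ℝ) (hr : StrictAnti r)
    (δ : ℝ) (hδ : 0 < δ)
    (φ : ℝ → ℝ) (hφ : Monotone φ)
    (t : Fin n → ℝ) (ht : t = fun i => φ (r i))
    (πDRRO : Fin n → ℝ) (hDRRO_mem : πDRRO ∈ stdSimplex ℝ (Fin n))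
    (hDRRO_opt : ∀ π ∈ stdSimplex ℝ (Fin n),
      (∑ i, π i * r i) - (⨆ i, (r i - δ * π i))
        ≤ (∑ i, πDRRO i * r i) - (⨆ i, (r i - δ * πDRRO i)))
    (πDRO : Fin n → ℝ)
    (hDRO_opt : ∀ π ∈ stdSimplex ℝ (Fin n),
      (∑ i, π i * r i) - δ * (⨆ i, π i)
        ≤ (∑ i, πDRO i * r i) - δ * (⨆ i, πDRO i))
    (m : Fin n)
    (hm : ∀ k : Fin n,
      (∑ i ∈ Finset.univ.filter (fun i => i ≤ k), r i) / ((k : ℝ) + 1)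
          - δ / ((k : ℝ) + 1)
        ≤ (∑ i ∈ Finset.univ.filter (fun i => i ≤ m), r i) / ((m : ℝ) + 1)
          - δ / ((m : ℝ) + 1))
    (hDRO_eq : πDRO = fun i => if i ≤ m then 1 / ((m : ℝ) + 1) else 0) :
    (∑ i, πDRO i * t i) ≤ (∑ i, πDRRO i * t i) ∧
    (StrictMono φ → πDRRO ≠ πDRO →
      (∑ i, πDRO i * t i) < (∑ i, πDRRO i * t i)) := by
  exact Stmt16Aux.stmt16' n r hr δ hδ φ hφ t ht πDRRO hDRRO_mem hDRRO_opt πDRO hDRO_opt m hm hDRO_eq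
end
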